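/- arXiv:2210.13116 — 3 statements merged into one kernel-verified Lean document; each statement's English description precedes it below -/
import Mathlib

section
/- Let a closed Riemannian manifold (M,g) admit two orthogonal unit vector fields ξ₁ and ξ₂; put D_i = span(ξ_i) (i = 1,2) and D3 = D1^⊥ ∩ D2^⊥. If ξ₁ and ξ₂ are geodesic vector fields, the pair (D1,D2) is mixed totally geodesic, and the pairs (D1,D3) and (D2,D3) are mixed integrable, then either the sectional curvature satisfies K(ξ₁(x),ξ₂(x)) < 0 at some point x ∈ M, or K(ξ₁,ξ₂) ≡ 0 on M and h̃₁|_{D2×D3} = 0, h̃₂|_{D1×D3} = 0, T̃₃|_{D1×D2} = 0 on all of M. -/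
open scoped BigOperators
noncomputable section

/-- An abstract model of the ℝ-module of smooth vector fields on a manifold `M`,
together with multiplication by smooth functions, the Lie bracket and the
directional derivative of smooth functions along vector fields. -/
structure SmoothVF (M : Type) where
  /-- the space of smooth vector fields -/
  VF : Type
  [vfAdd : AddCommGroup VF]
  [vfMod : Module ℝ VF]
  /-- multiplication of a vector field by a smooth function -/
  fsmul : (M → ℝ) → VF → VF
  /-- Lie bracket of vector fields -/
  bracket : VF → VF → VF
  /-- directional derivative of a smooth function along a vector field -/
  dd : VF → (M → ℝ) → (M → ℝ)
  fsmul_one : ∀ X : VF, fsmul 1 X = X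
  fsmul_mul : ∀ (f₁ f₂ : M → ℝ) (X : VF), fsmul (f₁ * f₂) X = fsmul f₁ (fsmul f₂ X)
  fsmul_add : ∀ (f : M → ℝ) (X Y : VF), fsmul f (X + Y) = fsmul f X + fsmul f Y
  add_fsmul : ∀ (f₁ f₂ : M → ℝ) (X : VF), fsmul (f₁ + f₂) X = fsmul f₁ X + fsmul f₂ X
  fsmul_const : ∀ (r : ℝ) (X : VF), fsmul (fun _ => r) X = r • X
  bracket_skew : ∀ X Y : VF, bracket X Y = - bracket Y X
  bracket_add_left : ∀ X Y Z : VF, bracket (X + Y) Z = bracket X Z + bracket Y Z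
  dd_add : ∀ (X : VF) (f₁ f₂ : M → ℝ), dd X (f₁ + f₂) = dd X f₁ + dd X f₂
  dd_mul : ∀ (X : VF) (f₁ f₂ : M → ℝ), dd X (f₁ * f₂) = f₁ * dd X f₂ + f₂ * dd X f₁
  dd_add_left : ∀ (X Y : VF) (f : M → ℝ), dd (X + Y) f = dd X f + dd Y f
  dd_fsmul : ∀ (h : M → ℝ) (X : VF) (f : M → ℝ), dd (fsmul h X) f = h * dd X f
  dd_bracket : ∀ (X Y : VF) (f : M → ℝ), dd (bracket X Y) f = dd X (dd Y f) - dd Y (dd X f)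

attribute [instance] SmoothVF.vfAdd SmoothVF.vfMod

/-- A Riemannian metric on the abstract space of vector fields, together with
its Levi-Civita connection (torsion-free and metric-compatible). -/
structure RMetric {M : Type} (V : SmoothVF M) where
  /-- the metric tensor -/
  g : V.VF → V.VF → (M → ℝ)
  /-- the Levi-Civita connection -/
  nabla : V.VF → V.VF → V.VF
  g_symm : ∀ X Y, g X Y = g Y X
  g_add_left : ∀ X Y Z, g (X + Y) Z = g X Z + g Y Z
  g_fsmul_left : ∀ f X Y, g (V.fsmul f X) Y = f * g X Y
  g_nonneg : ∀ X x, 0 ≤ g X X x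
  g_definite : ∀ X, g X X = 0 → X = 0
  nabla_add_left : ∀ X Y Z, nabla (X + Y) Z = nabla X Z + nabla Y Z
  nabla_add_right : ∀ X Y Z, nabla X (Y + Z) = nabla X Y + nabla X Z
  nabla_fsmul_left : ∀ f X Y, nabla (V.fsmul f X) Y = V.fsmul f (nabla X Y)
  nabla_leibniz : ∀ f X Y, nabla X (V.fsmul f Y) = V.fsmul (V.dd X f) Y + V.fsmul f (nabla X Y)
  torsion_free : ∀ X Y, nabla X Y - nabla Y X = V.bracket X Y
  metric_compat : ∀ X Y Z, V.dd X (g Y Z) = g (nabla X Y) Z + g Y (nabla X Z)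

namespace RMetric

variable {M : Type} {V : SmoothVF M} (gm : RMetric V)

/-- The Riemann curvature tensor `R(X,Y)Z = ∇_X∇_Y Z − ∇_Y∇_X Z − ∇_{[X,Y]}Z`. -/
def Rc (X Y Z : V.VF) : V.VF :=
  gm.nabla X (gm.nabla Y Z) - gm.nabla Y (gm.nabla X Z) - gm.nabla (V.bracket X Y) Z

end RMetric

/-- Three pairwise orthogonal distributions `D₁, D₂, D₃` (indices `0, 1, 2`)
decomposing the tangent bundle, described by their orthoprojectors. -/
structure Split3 {M : Type} {V : SmoothVF M} (gm : RMetric V) where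
  /-- the orthoprojector onto the `i`-th distribution -/
  P : Fin 3 → V.VF → V.VF
  P_add : ∀ i X Y, P i (X + Y) = P i X + P i Y
  P_fsmul : ∀ i f X, P i (V.fsmul f X) = V.fsmul f (P i X)
  P_idem : ∀ i X, P i (P i X) = P i X
  P_orth : ∀ i j X, i ≠ j → P i (P j X) = 0
  P_sum : ∀ X, P 0 X + P 1 X + P 2 X = X
  P_selfadj : ∀ i X Y, gm.g (P i X) Y = gm.g X (P i Y)

namespace Split3

variable {M : Type} {V : SmoothVF M} {gm : RMetric V} (s : Split3 gm)

/-- Orthoprojector onto the orthogonal complement of `D_i`. -/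
def Pp (i : Fin 3) (X : V.VF) : V.VF := X - s.P i X

/-- The second fundamental form `h_i` of the distribution `D_i`. -/
def h (i : Fin 3) (X Y : V.VF) : V.VF :=
  (1 / 2 : ℝ) • s.Pp i (gm.nabla (s.P i X) (s.P i Y) + gm.nabla (s.P i Y) (s.P i X))

/-- The integrability tensor `T_i` of the distribution `D_i`. -/
def T (i : Fin 3) (X Y : V.VF) : V.VF :=
  (1 / 2 : ℝ) • s.Pp i (gm.nabla (s.P i X) (s.P i Y) - gm.nabla (s.P i Y) (s.P i X))

/-- The second fundamental form `h̃_i` of `D_i^⊥`. -/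
def ht (i : Fin 3) (X Y : V.VF) : V.VF :=
  (1 / 2 : ℝ) • s.P i (gm.nabla (s.Pp i X) (s.Pp i Y) + gm.nabla (s.Pp i Y) (s.Pp i X))

/-- The integrability tensor `T̃_i` of `D_i^⊥`. -/
def Tt (i : Fin 3) (X Y : V.VF) : V.VF :=
  (1 / 2 : ℝ) • s.P i (gm.nabla (s.Pp i X) (s.Pp i Y) - gm.nabla (s.Pp i Y) (s.Pp i X))

/-- The mixed second fundamental form `𝔥_{ij}(X,Y) = h̃_k(P_iX,P_jY) + h̃_k(P_jX,P_iY)`,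
where `k` is the remaining index. -/
def mh (k i j : Fin 3) (X Y : V.VF) : V.VF :=
  s.ht k (s.P i X) (s.P j Y) + s.ht k (s.P j X) (s.P i Y)

/-- The mixed integrability tensor `𝔗_{ij}(X,Y) = T̃_k(P_iX,P_jY) + T̃_k(P_jX,P_iY)`,
where `k` is the remaining index. -/
def mT (k i j : Fin 3) (X Y : V.VF) : V.VF :=
  s.Tt k (s.P i X) (s.P j Y) + s.Tt k (s.P j X) (s.P i Y)

/-- Orthoprojector onto `D₁ ⊕ D₂`. -/
def P12 (X : V.VF) : V.VF := s.P 0 X + s.P 1 X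

/-- Second fundamental form of `D₁ ⊕ D₂`. -/
def h12 (X Y : V.VF) : V.VF :=
  (1 / 2 : ℝ) • s.P 2 (gm.nabla (s.P12 X) (s.P12 Y) + gm.nabla (s.P12 Y) (s.P12 X))

/-- Integrability tensor of `D₁ ⊕ D₂`. -/
def T12 (X Y : V.VF) : V.VF :=
  (1 / 2 : ℝ) • s.P 2 (gm.nabla (s.P12 X) (s.P12 Y) - gm.nabla (s.P12 Y) (s.P12 X))

/-- Integrability tensor of `(D₁ ⊕ D₂)^⊥ = D₃`'s complement pair, i.e. `T̃` of `D₁⊕D₂`. -/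
def Tt12 (X Y : V.VF) : V.VF :=
  (1 / 2 : ℝ) • s.P12 (gm.nabla (s.P 2 X) (s.P 2 Y) - gm.nabla (s.P 2 Y) (s.P 2 X))

/-- The connection `∇^P_X Y = P ∇_X (P Y)` induced on `D = D₁ ⊕ D₂`. -/
def nablaP (X Y : V.VF) : V.VF := s.P12 (gm.nabla X (s.P12 Y))

/-- The curvature tensor of the induced connection `∇^P`. -/
def RP (X Y Z : V.VF) : V.VF :=
  s.nablaP X (s.nablaP Y Z) - s.nablaP Y (s.nablaP X Z) - s.nablaP (V.bracket X Y) Z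

end Split3

/-- A full Riemannian package on `M`: a metric with its Levi-Civita connection,
three pairwise orthogonal distributions decomposing the tangent bundle,
global orthonormal frames adapted to the distributions, and a volume density. -/
structure Pkg {M : Type} (V : SmoothVF M) where
  /-- the Riemannian metric with its Levi-Civita connection -/
  gm : RMetric V
  /-- the orthoprojectors onto the three distributions -/
  sp : Split3 gm
  /-- index types for the adapted orthonormal frames -/
  ι : Fin 3 → Type
  fint : ∀ i, Fintype (ι i)
  deq : ∀ i, DecidableEq (ι i)
  /-- an orthonormal frame of the `i`-th distribution -/
  E : ∀ i, ι i → V.VF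
  E_mem : ∀ i a, sp.P i (E i a) = E i a
  E_ortho : ∀ i a b, gm.g (E i a) (E i b) = fun _ => @ite ℝ (a = b) (deq i a b) 1 0
  E_span : ∀ i X, sp.P i X = ∑ a ∈ (fint i).elems, V.fsmul (gm.g X (E i a)) (E i a)
  /-- the volume density of the metric (with respect to a reference integral) -/
  dvol : M → ℝ
  dvol_pos : ∀ x, 0 < dvol x

attribute [instance] Pkg.fint Pkg.deq

namespace Pkg

variable {M : Type} {V : SmoothVF M} (p : Pkg V)

/-- Index type of the full adapted orthonormal frame. -/
def idx : Type := Σ i : Fin 3, p.ι i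

instance : Fintype p.idx := inferInstanceAs (Fintype (Σ i : Fin 3, p.ι i))

/-- The full adapted orthonormal frame. -/
def xF (k : p.idx) : V.VF := p.E k.1 k.2

/-- The mean curvature vector `H_i = tr_g h_i` of `D_i`. -/
def H (i : Fin 3) : V.VF := ∑ a : p.ι i, p.sp.h i (p.E i a) (p.E i a)

/-- Divergence of a vector field. -/
def Div (Y : V.VF) : M → ℝ := ∑ k : p.idx, p.gm.g (p.gm.nabla (p.xF k) Y) (p.xF k)

/-- Divergence of a `(1,2)`-tensor field. -/
def DivT (S : V.VF → V.VF → V.VF) (X Y : V.VF) : M → ℝ :=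
  ∑ k : p.idx,
    p.gm.g (p.gm.nabla (p.xF k) (S X Y) - S (p.gm.nabla (p.xF k) X) Y
              - S X (p.gm.nabla (p.xF k) Y)) (p.xF k)

/-- Divergence of a `(1,1)`-tensor field, as a 1-form. -/
def DivOp (S : V.VF → V.VF) (X : V.VF) : M → ℝ :=
  ∑ k : p.idx, p.gm.g (p.gm.nabla (p.xF k) (S X) - S (p.gm.nabla (p.xF k) X)) (p.xF k)

/-- The mutual curvature of the distributions `D_i` and `D_j`. -/
def Smix (i j : Fin 3) : M → ℝ :=
  ∑ a : p.ι i, ∑ b : p.ι j, p.gm.g (p.gm.Rc (p.E i a) (p.E j b) (p.E j b)) (p.E i a)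

/-- The mutual curvature `S_{D₁,D₂}`. -/
def Smut : M → ℝ := p.Smix 0 1

/-- The mixed scalar `P`-curvature `S^P_mix(D₁,D₂)` of the induced connection on `D₁ ⊕ D₂`. -/
def SPmix : M → ℝ :=
  ∑ a : p.ι 0, ∑ b : p.ι 1, p.gm.g (p.sp.RP (p.E 0 a) (p.E 1 b) (p.E 1 b)) (p.E 0 a)

/-- Squared norm of a `(1,2)`-tensor restricted to `D_i × D_j`. -/
def normRes (S : V.VF → V.VF → V.VF) (i j : Fin 3) : M → ℝ :=
  ∑ a : p.ι i, ∑ b : p.ι j, p.gm.g (S (p.E i a) (p.E j b)) (S (p.E i a) (p.E j b))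

/-- Squared norm of a `(1,2)`-tensor. -/
def normT (S : V.VF → V.VF → V.VF) : M → ℝ :=
  ∑ k : p.idx, ∑ l : p.idx, p.gm.g (S (p.xF k) (p.xF l)) (S (p.xF k) (p.xF l))

/-- The gradient of a smooth function. -/
def grad (f : M → ℝ) : V.VF := ∑ k : p.idx, V.fsmul (V.dd (p.xF k) f) (p.xF k)

/-- The shape operator `A_{i,Z}` of `D_i`, `g(A_{i,Z}X, W) = g(h_i(X,W), Z)`. -/
def Aop (i : Fin 3) (Z X : V.VF) : V.VF :=
  ∑ k : p.idx, V.fsmul (p.gm.g (p.sp.h i X (p.xF k)) Z) (p.xF k)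

/-- The shape operator `A_{12,Z}` of `D₁ ⊕ D₂`. -/
def Aop12 (Z X : V.VF) : V.VF :=
  ∑ k : p.idx, V.fsmul (p.gm.g (p.sp.h12 X (p.xF k)) Z) (p.xF k)

/-- The operator `T̃♯_{i,Z}`, `g(T̃♯_{i,Z}X, W) = g(T̃_i(X,W), Z)`. -/
def Ttop (i : Fin 3) (Z X : V.VF) : V.VF :=
  ∑ k : p.idx, V.fsmul (p.gm.g (p.sp.Tt i X (p.xF k)) Z) (p.xF k)

/-- The operator `T̃♯_{12,Z}` of `D₁ ⊕ D₂`. -/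
def Ttop12 (Z X : V.VF) : V.VF :=
  ∑ k : p.idx, V.fsmul (p.gm.g (p.sp.Tt12 X (p.xF k)) Z) (p.xF k)

/-- The action `J_{D₁,D₂}(g) = ∫ S_{D₁,D₂} dvol_g`, with respect to the
reference integral `I`. -/
def J (I : (M → ℝ) →ₗ[ℝ] ℝ) : ℝ := I (p.Smut * p.dvol)

/-- The modified action `J_{D₁⊂D}(g) = ∫ S_{D₁,D₁^⊥∩D} dvol_g` (here `D₃ = D₁^⊥ ∩ D`). -/
def Jmod (I : (M → ℝ) →ₗ[ℝ] ℝ) : ℝ := I (p.Smix 0 2 * p.dvol)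

/-- The volume `Vol(g) = ∫ dvol_g`. -/
def Vol (I : (M → ℝ) →ₗ[ℝ] ℝ) : ℝ := I p.dvol

end Pkg

/-- Two endomorphisms have the same range (as idempotents: each fixes the
image of the other). -/
def SameRange {A : Type} (Q Q' : A → A) : Prop :=
  (∀ X, Q (Q' X) = Q' X) ∧ (∀ X, Q' (Q X) = Q X)

/-- A smooth 1-parameter variation `g_t` of the Riemannian package `p0`,
with infinitesimal variation tensor `B = ∂ₜ g_t |_{t=0}`. -/
structure Variation {M : Type} {V : SmoothVF M} (p0 : Pkg V) where
  /-- the family of Riemannian packages -/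
  Gt : ℝ → Pkg V
  at0 : Gt 0 = p0
  /-- the infinitesimal variation `B = ∂ₜ g_t |_{t=0}` -/
  B : V.VF → V.VF → (M → ℝ)
  derivB : ∀ X Y x, HasDerivAt (fun t => (Gt t).gm.g X Y x) (B X Y x) 0

namespace Variation

variable {M : Type} {V : SmoothVF M} {p0 : Pkg V} (v : Variation p0)

/-- The variation keeps the distributions `D₁` and `D₂` fixed (and hence
orthogonal); the complement `D₃(t)` may vary. -/
def KeepsD12 : Prop :=
  ∀ t, SameRange ((v.Gt t).sp.P 0) (p0.sp.P 0) ∧ SameRange ((v.Gt t).sp.P 1) (p0.sp.P 1)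

/-- Adapted variation: all three distributions stay fixed and pairwise orthogonal. -/
def Adapted : Prop := ∀ t, ∀ i : Fin 3, SameRange ((v.Gt t).sp.P i) (p0.sp.P i)

/-- Volume-preserving variation. -/
def VolPres (I : (M → ℝ) →ₗ[ℝ] ℝ) : Prop := ∀ t, (v.Gt t).Vol I = p0.Vol I

end Variation


section AuxHelpers

variable {M : Type} {V : SmoothVF M}

lemma aux_fsmul_zero_fn (X : V.VF) : V.fsmul 0 X = 0 := by
  have h := V.fsmul_const 0 X
  rw [zero_smul] at h
  exact h

lemma aux_fsmul_zero_vf (f : M → ℝ) : V.fsmul f 0 = 0 := by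
  have h := V.fsmul_add f 0 0
  rw [add_zero] at h
  exact left_eq_add.mp h

lemma aux_dd_zero (X : V.VF) : V.dd X 0 = 0 := by
  have h := V.dd_add X 0 0
  rw [add_zero] at h
  exact left_eq_add.mp h

lemma aux_dd_one (X : V.VF) : V.dd X 1 = 0 := by
  have h := V.dd_mul X 1 1
  rw [mul_one, one_mul] at h
  exact left_eq_add.mp h

variable (gm : RMetric V)

lemma aux_g_zero_left (Y : V.VF) : gm.g 0 Y = 0 := by
  have h := gm.g_add_left 0 0 Y
  rw [add_zero] at h
  exact left_eq_add.mp h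

lemma aux_g_zero_right (X : V.VF) : gm.g X 0 = 0 := by
  rw [gm.g_symm]; exact aux_g_zero_left gm X

lemma aux_g_neg_left (X Y : V.VF) : gm.g (-X) Y = - gm.g X Y := by
  have h := gm.g_add_left X (-X) Y
  rw [add_neg_cancel, aux_g_zero_left] at h
  exact eq_neg_of_add_eq_zero_right h.symm

lemma aux_g_neg_right (X Y : V.VF) : gm.g X (-Y) = - gm.g X Y := by
  rw [gm.g_symm, aux_g_neg_left, gm.g_symm]

lemma aux_g_sub_left (X Y Z : V.VF) : gm.g (X - Y) Z = gm.g X Z - gm.g Y Z := by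
  rw [sub_eq_add_neg, gm.g_add_left, aux_g_neg_left, sub_eq_add_neg]

lemma aux_g_add_right (X Y Z : V.VF) : gm.g X (Y + Z) = gm.g X Y + gm.g X Z := by
  rw [gm.g_symm, gm.g_add_left, gm.g_symm Y X, gm.g_symm Z X]

lemma aux_g_fsmul_right (f : M → ℝ) (X Y : V.VF) :
    gm.g X (V.fsmul f Y) = f * gm.g X Y := by
  rw [gm.g_symm, gm.g_fsmul_left, gm.g_symm]

lemma aux_nabla_zero_right (X : V.VF) : gm.nabla X 0 = 0 := by
  have h := gm.nabla_add_right X 0 0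
  rw [add_zero] at h
  exact left_eq_add.mp h

lemma aux_nabla_zero_left (Y : V.VF) : gm.nabla 0 Y = 0 := by
  have h := gm.nabla_add_left 0 0 Y
  rw [add_zero] at h
  exact left_eq_add.mp h

variable {gm}

lemma aux_P_zero (s : Split3 gm) (i : Fin 3) : s.P i 0 = 0 := by
  have h := s.P_add i 0 0
  rw [add_zero] at h
  exact left_eq_add.mp h

lemma aux_P_neg (s : Split3 gm) (i : Fin 3) (X : V.VF) : s.P i (-X) = - s.P i X := by
  have h := s.P_add i X (-X)
  rw [add_neg_cancel, aux_P_zero] at h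
  exact eq_neg_of_add_eq_zero_right h.symm

lemma aux_P_sub (s : Split3 gm) (i : Fin 3) (X Y : V.VF) :
    s.P i (X - Y) = s.P i X - s.P i Y := by
  rw [sub_eq_add_neg, s.P_add, aux_P_neg, sub_eq_add_neg]

lemma aux_Pp_zero (s : Split3 gm) (i : Fin 3) : s.Pp i 0 = 0 := by
  show (0 : V.VF) - s.P i 0 = 0
  rw [aux_P_zero, sub_zero]

lemma aux_Tt_zero_left (s : Split3 gm) (i : Fin 3) (W : V.VF) : s.Tt i 0 W = 0 := by
  show (1 / 2 : ℝ) • s.P i (gm.nabla (s.Pp i 0) (s.Pp i W) - gm.nabla (s.Pp i W) (s.Pp i 0)) = 0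
  rw [aux_Pp_zero, aux_nabla_zero_left, aux_nabla_zero_right, sub_zero, aux_P_zero, smul_zero]

lemma aux_ht_zero_left (s : Split3 gm) (i : Fin 3) (W : V.VF) : s.ht i 0 W = 0 := by
  show (1 / 2 : ℝ) • s.P i (gm.nabla (s.Pp i 0) (s.Pp i W) + gm.nabla (s.Pp i W) (s.Pp i 0)) = 0
  rw [aux_Pp_zero, aux_nabla_zero_left, aux_nabla_zero_right, zero_add, aux_P_zero, smul_zero]

lemma aux_Tt_zero_right (s : Split3 gm) (i : Fin 3) (W : V.VF) : s.Tt i W 0 = 0 := by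
  show (1 / 2 : ℝ) • s.P i (gm.nabla (s.Pp i W) (s.Pp i 0) - gm.nabla (s.Pp i 0) (s.Pp i W)) = 0
  rw [aux_Pp_zero, aux_nabla_zero_left, aux_nabla_zero_right, zero_sub, aux_P_neg, aux_P_zero,
    neg_zero, smul_zero]

lemma aux_ht_zero_right (s : Split3 gm) (i : Fin 3) (W : V.VF) : s.ht i W 0 = 0 := by
  show (1 / 2 : ℝ) • s.P i (gm.nabla (s.Pp i W) (s.Pp i 0) + gm.nabla (s.Pp i 0) (s.Pp i W)) = 0
  rw [aux_Pp_zero, aux_nabla_zero_left, aux_nabla_zero_right, add_zero, aux_P_zero, smul_zero]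

lemma aux_add_self_zero {f : M → ℝ} (h : f + f = 0) : f = 0 := by
  funext x
  have h1 := congrFun h x
  simp only [Pi.add_apply, Pi.zero_apply] at h1
  show f x = (0 : M → ℝ) x
  rw [Pi.zero_apply]
  linarith

lemma aux_half_smul_eq_zero {A : Type} [AddCommGroup A] [Module ℝ A] {w : A}
    (h : (1 / 2 : ℝ) • w = 0) : w = 0 := by
  have h2 : w = (2 : ℝ) • ((1 / 2 : ℝ) • w) := by
    rw [smul_smul]; norm_num
  rw [h2, h, smul_zero]

end AuxHelpers

/-- On a closed Riemannian manifold with two orthogonal unit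
vector fields `ξ₁, ξ₂` spanning `D₁, D₂`, and `D₃ = D₁^⊥ ∩ D₂^⊥`: if `ξ₁, ξ₂` are
geodesic, the pair `(D₁,D₂)` is mixed totally geodesic, and the pairs `(D₁,D₃)` and
`(D₂,D₃)` are mixed integrable, then either `K(ξ₁,ξ₂) < 0` at some point, or
`K(ξ₁,ξ₂) ≡ 0` and `h̃₁|_{D₂×D₃} = h̃₂|_{D₁×D₃} = T̃₃|_{D₁×D₂} = 0` on `M`. -/
theorem closed_geodesic_mixed_dichotomy
    {M : Type} {V : SmoothVF M} (p : Pkg V)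
    [hu0 : Unique (p.ι 0)] [hu1 : Unique (p.ι 1)]
    (I : (M → ℝ) →ₗ[ℝ] ℝ)
    (hI_nonneg : ∀ f : M → ℝ, (∀ x, 0 ≤ f x) → 0 ≤ I f)
    (hI_definite : ∀ f : M → ℝ, (∀ x, 0 ≤ f x) → I f = 0 → f = 0)
    (hStokes : ∀ Y : V.VF, I (p.Div Y) = 0)
    -- ξ₁ and ξ₂ are geodesic vector fields
    (hgeo1 : p.gm.nabla (p.E 0 default) (p.E 0 default) = 0)
    (hgeo2 : p.gm.nabla (p.E 1 default) (p.E 1 default) = 0)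
    -- the pair (D₁,D₂) is mixed totally geodesic
    (h12 : ∀ X Y, p.sp.mh 2 0 1 X Y = 0)
    -- the pairs (D₁,D₃) and (D₂,D₃) are mixed integrable
    (h13 : ∀ X Y, p.sp.mT 1 0 2 X Y = 0)
    (h23 : ∀ X Y, p.sp.mT 0 1 2 X Y = 0) :
    (∃ x : M,
        p.gm.g (p.gm.Rc (p.E 0 default) (p.E 1 default) (p.E 1 default)) (p.E 0 default) x < 0)
    ∨ (p.gm.g (p.gm.Rc (p.E 0 default) (p.E 1 default) (p.E 1 default)) (p.E 0 default) = 0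
        ∧ (∀ X Y, p.sp.ht 0 (p.sp.P 1 X) (p.sp.P 2 Y) = 0)
        ∧ (∀ X Y, p.sp.ht 1 (p.sp.P 0 X) (p.sp.P 2 Y) = 0)
        ∧ (∀ X Y, p.sp.Tt 2 (p.sp.P 0 X) (p.sp.P 1 Y) = 0)) := by
  classical
  set ξ1 := p.E 0 default with hξ1
  set ξ2 := p.E 1 default with hξ2
  have hne01 : (0 : Fin 3) ≠ 1 := by decide
  have hne02 : (0 : Fin 3) ≠ 2 := by decide
  have hne10 : (1 : Fin 3) ≠ 0 := by decide
  have hne12 : (1 : Fin 3) ≠ 2 := by decide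
  have hne20 : (2 : Fin 3) ≠ 0 := by decide
  have hne21 : (2 : Fin 3) ≠ 1 := by decide
  have hP0ξ1 : p.sp.P 0 ξ1 = ξ1 := p.E_mem 0 default
  have hP1ξ2 : p.sp.P 1 ξ2 = ξ2 := p.E_mem 1 default
  have hP1ξ1 : p.sp.P 1 ξ1 = 0 := by
    calc p.sp.P 1 ξ1 = p.sp.P 1 (p.sp.P 0 ξ1) := by rw [hP0ξ1]
      _ = 0 := p.sp.P_orth 1 0 ξ1 hne10
  have hP2ξ1 : p.sp.P 2 ξ1 = 0 := by
    calc p.sp.P 2 ξ1 = p.sp.P 2 (p.sp.P 0 ξ1) := by rw [hP0ξ1]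
      _ = 0 := p.sp.P_orth 2 0 ξ1 hne20
  have hP0ξ2 : p.sp.P 0 ξ2 = 0 := by
    calc p.sp.P 0 ξ2 = p.sp.P 0 (p.sp.P 1 ξ2) := by rw [hP1ξ2]
      _ = 0 := p.sp.P_orth 0 1 ξ2 hne01
  have hP2ξ2 : p.sp.P 2 ξ2 = 0 := by
    calc p.sp.P 2 ξ2 = p.sp.P 2 (p.sp.P 1 ξ2) := by rw [hP1ξ2]
      _ = 0 := p.sp.P_orth 2 1 ξ2 hne21
  have g12 : p.gm.g ξ1 ξ2 = 0 := by
    calc p.gm.g ξ1 ξ2 = p.gm.g (p.sp.P 0 ξ1) ξ2 := by rw [hP0ξ1]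
      _ = p.gm.g ξ1 (p.sp.P 0 ξ2) := p.sp.P_selfadj 0 ξ1 ξ2
      _ = 0 := by rw [hP0ξ2, aux_g_zero_right]
  have g21 : p.gm.g ξ2 ξ1 = 0 := by rw [p.gm.g_symm]; exact g12
  have g11 : p.gm.g ξ1 ξ1 = 1 := by
    rw [hξ1, p.E_ortho]
    funext x; simp
  have g22 : p.gm.g ξ2 ξ2 = 1 := by
    rw [hξ2, p.E_ortho]
    funext x; simp
  have hspan0 : ∀ W, p.sp.P 0 W = V.fsmul (p.gm.g W ξ1) ξ1 := by
    intro W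
    rw [p.E_span 0 W]
    have he : (p.fint 0).elems = {default} := by
      apply Finset.eq_singleton_iff_unique_mem.mpr
      exact ⟨(p.fint 0).complete default, fun x _ => Subsingleton.elim x default⟩
    rw [he, Finset.sum_singleton]
  have hspan1 : ∀ W, p.sp.P 1 W = V.fsmul (p.gm.g W ξ2) ξ2 := by
    intro W
    rw [p.E_span 1 W]
    have he : (p.fint 1).elems = {default} := by
      apply Finset.eq_singleton_iff_unique_mem.mpr
      exact ⟨(p.fint 1).complete default, fun x _ => Subsingleton.elim x default⟩
    rw [he, Finset.sum_singleton]
  have hP0z : ∀ W, p.gm.g W ξ1 = 0 → p.sp.P 0 W = 0 := fun W h => by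
    rw [hspan0 W, h, aux_fsmul_zero_fn]
  have hP1z : ∀ W, p.gm.g W ξ2 = 0 → p.sp.P 1 W = 0 := fun W h => by
    rw [hspan1 W, h, aux_fsmul_zero_fn]
  have hP2fix : ∀ W, p.gm.g W ξ1 = 0 → p.gm.g W ξ2 = 0 → p.sp.P 2 W = W := fun W h1 h2 => by
    have hs := p.sp.P_sum W
    rw [hP0z W h1, hP1z W h2, zero_add, zero_add] at hs
    exact hs
  have hgP0 : ∀ W, p.sp.P 0 W = 0 → p.gm.g W ξ1 = 0 := fun W h => by
    calc p.gm.g W ξ1 = p.gm.g W (p.sp.P 0 ξ1) := by rw [hP0ξ1]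
      _ = p.gm.g (p.sp.P 0 W) ξ1 := (p.sp.P_selfadj 0 W ξ1).symm
      _ = 0 := by rw [h, aux_g_zero_left]
  have hgP1 : ∀ W, p.sp.P 1 W = 0 → p.gm.g W ξ2 = 0 := fun W h => by
    calc p.gm.g W ξ2 = p.gm.g W (p.sp.P 1 ξ2) := by rw [hP1ξ2]
      _ = p.gm.g (p.sp.P 1 W) ξ2 := (p.sp.P_selfadj 1 W ξ2).symm
      _ = 0 := by rw [h, aux_g_zero_left]
  set a := p.gm.nabla ξ1 ξ2 with ha_def
  set b := p.gm.nabla ξ2 ξ1 with hb_def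
  have ga1 : p.gm.g a ξ1 = 0 := by
    have h := p.gm.metric_compat ξ1 ξ2 ξ1
    rw [← ha_def, g21, aux_dd_zero, hgeo1, aux_g_zero_right, add_zero] at h
    exact h.symm
  have ga2 : p.gm.g a ξ2 = 0 := by
    have h := p.gm.metric_compat ξ1 ξ2 ξ2
    rw [← ha_def, g22, aux_dd_one, p.gm.g_symm ξ2 a] at h
    exact aux_add_self_zero h.symm
  have gb1 : p.gm.g b ξ1 = 0 := by
    have h := p.gm.metric_compat ξ2 ξ1 ξ1
    rw [← hb_def, g11, aux_dd_one, p.gm.g_symm ξ1 b] at h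
    exact aux_add_self_zero h.symm
  have gb2 : p.gm.g b ξ2 = 0 := by
    have h := p.gm.metric_compat ξ2 ξ1 ξ2
    rw [← hb_def, g12, aux_dd_zero, hgeo2, aux_g_zero_right, add_zero] at h
    exact h.symm
  have hP2a : p.sp.P 2 a = a := hP2fix a ga1 ga2
  have hP2b : p.sp.P 2 b = b := hP2fix b gb1 gb2
  have hPp2ξ1 : p.sp.Pp 2 ξ1 = ξ1 := by
    show ξ1 - p.sp.P 2 ξ1 = ξ1
    rw [hP2ξ1, sub_zero]
  have hPp2ξ2 : p.sp.Pp 2 ξ2 = ξ2 := by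
    show ξ2 - p.sp.P 2 ξ2 = ξ2
    rw [hP2ξ2, sub_zero]
  have hPp1ξ1 : p.sp.Pp 1 ξ1 = ξ1 := by
    show ξ1 - p.sp.P 1 ξ1 = ξ1
    rw [hP1ξ1, sub_zero]
  have hPp0ξ2 : p.sp.Pp 0 ξ2 = ξ2 := by
    show ξ2 - p.sp.P 0 ξ2 = ξ2
    rw [hP0ξ2, sub_zero]
  have hPp1Z : ∀ Z, p.sp.P 2 Z = Z → p.sp.Pp 1 Z = Z := fun Z hZ => by
    show Z - p.sp.P 1 Z = Z
    have h : p.sp.P 1 Z = 0 := by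
      calc p.sp.P 1 Z = p.sp.P 1 (p.sp.P 2 Z) := by rw [hZ]
        _ = 0 := p.sp.P_orth 1 2 Z hne12
    rw [h, sub_zero]
  have hPp0Z : ∀ Z, p.sp.P 2 Z = Z → p.sp.Pp 0 Z = Z := fun Z hZ => by
    show Z - p.sp.P 0 Z = Z
    have h : p.sp.P 0 Z = 0 := by
      calc p.sp.P 0 Z = p.sp.P 0 (p.sp.P 2 Z) := by rw [hZ]
        _ = 0 := p.sp.P_orth 0 2 Z hne02
    rw [h, sub_zero]
  -- (D₁,D₂) mixed totally geodesic forces ∇_{ξ₂}ξ₁ = −∇_{ξ₁}ξ₂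
  have hba : b = -a := by
    have h := h12 ξ1 ξ2
    simp only [Split3.mh] at h
    rw [hP0ξ1, hP1ξ2, hP1ξ1, hP0ξ2, aux_ht_zero_left, add_zero] at h
    simp only [Split3.ht] at h
    rw [hPp2ξ1, hPp2ξ2, ← ha_def, ← hb_def] at h
    have h2 := aux_half_smul_eq_zero h
    rw [p.sp.P_add, hP2a, hP2b] at h2
    rw [add_comm] at h2
    exact eq_neg_of_add_eq_zero_left h2
  -- mixed integrability identities
  have hTt1 : ∀ Z, p.sp.P 2 Z = Z →
      p.sp.P 1 (p.gm.nabla ξ1 Z - p.gm.nabla Z ξ1) = 0 := by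
    intro Z hZ
    have h := h13 ξ1 Z
    simp only [Split3.mT] at h
    rw [hP0ξ1, hZ, hP2ξ1, aux_Tt_zero_left, add_zero] at h
    simp only [Split3.Tt] at h
    rw [hPp1ξ1, hPp1Z Z hZ] at h
    exact aux_half_smul_eq_zero h
  have hTt0 : ∀ Z, p.sp.P 2 Z = Z →
      p.sp.P 0 (p.gm.nabla ξ2 Z - p.gm.nabla Z ξ2) = 0 := by
    intro Z hZ
    have h := h23 ξ2 Z
    simp only [Split3.mT] at h
    rw [hP1ξ2, hZ, hP2ξ2, aux_Tt_zero_left, add_zero] at h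
    simp only [Split3.Tt] at h
    rw [hPp0ξ2, hPp0Z Z hZ] at h
    exact aux_half_smul_eq_zero h
  have hgTt1 : ∀ Z, p.sp.P 2 Z = Z →
      p.gm.g (p.gm.nabla Z ξ1) ξ2 = p.gm.g (p.gm.nabla ξ1 Z) ξ2 := by
    intro Z hZ
    have h := hgP1 _ (hTt1 Z hZ)
    rw [aux_g_sub_left] at h
    exact (sub_eq_zero.mp h).symm
  have hgTt0 : ∀ Z, p.sp.P 2 Z = Z →
      p.gm.g (p.gm.nabla Z ξ2) ξ1 = p.gm.g (p.gm.nabla ξ2 Z) ξ1 := by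
    intro Z hZ
    have h := hgP0 _ (hTt0 Z hZ)
    rw [aux_g_sub_left] at h
    exact (sub_eq_zero.mp h).symm
  -- the bracket and the curvature
  have hbr : V.bracket ξ1 ξ2 = a + a := by
    have h := p.gm.torsion_free ξ1 ξ2
    rw [← ha_def, ← hb_def, hba, sub_neg_eq_add] at h
    exact h.symm
  have hg1 : p.gm.g (p.gm.nabla ξ2 a) ξ1 = p.gm.g a a := by
    have h := p.gm.metric_compat ξ2 a ξ1
    rw [← hb_def, ga1, aux_dd_zero, hba, aux_g_neg_right, ← sub_eq_add_neg] at h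
    exact sub_eq_zero.mp h.symm
  have hg2 : p.gm.g (p.gm.nabla a ξ2) ξ1 = p.gm.g a a := (hgTt0 a hP2a).trans hg1
  have hK : p.gm.g (p.gm.Rc ξ1 ξ2 ξ2) ξ1
      = (0 - p.gm.g a a) - (p.gm.g a a + p.gm.g a a) := by
    show p.gm.g (p.gm.nabla ξ1 (p.gm.nabla ξ2 ξ2) - p.gm.nabla ξ2 (p.gm.nabla ξ1 ξ2)
        - p.gm.nabla (V.bracket ξ1 ξ2) ξ2) ξ1 = _
    rw [hgeo2, aux_nabla_zero_right, ← ha_def, hbr, p.gm.nabla_add_left,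
      aux_g_sub_left, aux_g_sub_left, aux_g_zero_left, p.gm.g_add_left, hg1, hg2]
  by_cases hex : ∃ x, p.gm.g (p.gm.Rc ξ1 ξ2 ξ2) ξ1 x < 0
  · exact Or.inl hex
  · push_neg at hex
    have haa : p.gm.g a a = 0 := by
      funext x
      have h1 := hex x
      have h2 := p.gm.g_nonneg a x
      have h3 := congrFun hK x
      simp only [Pi.sub_apply, Pi.add_apply, Pi.zero_apply] at h3
      show p.gm.g a a x = (0 : M → ℝ) x
      rw [Pi.zero_apply]
      linarith
    have ha0 : a = 0 := p.gm.g_definite a haa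
    have hb0 : b = 0 := by rw [hba, ha0, neg_zero]
    -- the key pointwise vanishing facts, now that a = 0
    have hgZ2 : ∀ Y, p.gm.g (p.sp.P 2 Y) ξ2 = 0 := fun Y => by
      rw [p.sp.P_selfadj 2 Y ξ2, hP2ξ2, aux_g_zero_right]
    have key1' : ∀ Y, p.gm.g (p.gm.nabla ξ1 (p.sp.P 2 Y)) ξ2 = 0 := by
      intro Y
      have h := p.gm.metric_compat ξ1 (p.sp.P 2 Y) ξ2
      rw [hgZ2 Y, aux_dd_zero, ← ha_def, ha0, aux_g_zero_right, add_zero] at h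
      exact h.symm
    have key1 : ∀ Y, p.gm.g (p.gm.nabla (p.sp.P 2 Y) ξ1) ξ2 = 0 := fun Y => by
      rw [hgTt1 _ (p.sp.P_idem 2 Y)]
      exact key1' Y
    have key2 : ∀ Y, p.gm.g (p.gm.nabla (p.sp.P 2 Y) ξ2) ξ1 = 0 := fun Y => by
      have h := p.gm.metric_compat (p.sp.P 2 Y) ξ2 ξ1
      rw [g21, aux_dd_zero, p.gm.g_symm ξ2, key1 Y, add_zero] at h
      exact h.symm
    have key2' : ∀ Y, p.gm.g (p.gm.nabla ξ2 (p.sp.P 2 Y)) ξ1 = 0 := fun Y => by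
      rw [← hgTt0 _ (p.sp.P_idem 2 Y)]
      exact key2 Y
    refine Or.inr ⟨?_, ?_, ?_, ?_⟩
    · rw [hK, haa]; simp
    · -- h̃₀ on D₂ × D₃ vanishes
      intro X Y
      have claim0 : p.gm.g (p.gm.nabla (p.sp.P 1 X) (p.sp.P 2 Y)
          + p.gm.nabla (p.sp.P 2 Y) (p.sp.P 1 X)) ξ1 = 0 := by
        have e1 : p.gm.g (p.gm.nabla (p.sp.P 1 X) (p.sp.P 2 Y)) ξ1 = 0 := by
          rw [hspan1 X, p.gm.nabla_fsmul_left, p.gm.g_fsmul_left, key2' Y, mul_zero]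
        have e2 : p.gm.g (p.gm.nabla (p.sp.P 2 Y) (p.sp.P 1 X)) ξ1 = 0 := by
          rw [hspan1 X, p.gm.nabla_leibniz, p.gm.g_add_left, p.gm.g_fsmul_left,
            p.gm.g_fsmul_left, key2 Y, g21, mul_zero, mul_zero, add_zero]
        rw [p.gm.g_add_left, e1, e2, add_zero]
      have hPp0P1 : p.sp.Pp 0 (p.sp.P 1 X) = p.sp.P 1 X := by
        show p.sp.P 1 X - p.sp.P 0 (p.sp.P 1 X) = p.sp.P 1 X
        rw [p.sp.P_orth 0 1 X hne01, sub_zero]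
      have hPp0P2 : p.sp.Pp 0 (p.sp.P 2 Y) = p.sp.P 2 Y := by
        show p.sp.P 2 Y - p.sp.P 0 (p.sp.P 2 Y) = p.sp.P 2 Y
        rw [p.sp.P_orth 0 2 Y hne02, sub_zero]
      simp only [Split3.ht]
      rw [hPp0P1, hPp0P2, hP0z _ claim0, smul_zero]
    · -- h̃₁ on D₁ × D₃ vanishes
      intro X Y
      have claim1 : p.gm.g (p.gm.nabla (p.sp.P 0 X) (p.sp.P 2 Y)
          + p.gm.nabla (p.sp.P 2 Y) (p.sp.P 0 X)) ξ2 = 0 := by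
        have e1 : p.gm.g (p.gm.nabla (p.sp.P 0 X) (p.sp.P 2 Y)) ξ2 = 0 := by
          rw [hspan0 X, p.gm.nabla_fsmul_left, p.gm.g_fsmul_left, key1' Y, mul_zero]
        have e2 : p.gm.g (p.gm.nabla (p.sp.P 2 Y) (p.sp.P 0 X)) ξ2 = 0 := by
          rw [hspan0 X, p.gm.nabla_leibniz, p.gm.g_add_left, p.gm.g_fsmul_left,
            p.gm.g_fsmul_left, key1 Y, g12, mul_zero, mul_zero, add_zero]
        rw [p.gm.g_add_left, e1, e2, add_zero]
      have hPp1P0 : p.sp.Pp 1 (p.sp.P 0 X) = p.sp.P 0 X := by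
        show p.sp.P 0 X - p.sp.P 1 (p.sp.P 0 X) = p.sp.P 0 X
        rw [p.sp.P_orth 1 0 X hne10, sub_zero]
      have hPp1P2 : p.sp.Pp 1 (p.sp.P 2 Y) = p.sp.P 2 Y := by
        show p.sp.P 2 Y - p.sp.P 1 (p.sp.P 2 Y) = p.sp.P 2 Y
        rw [p.sp.P_orth 1 2 Y hne12, sub_zero]
      simp only [Split3.ht]
      rw [hPp1P0, hPp1P2, hP1z _ claim1, smul_zero]
    · -- T̃₂ on D₁ × D₂ vanishes
      intro X Y
      have e1 : p.sp.P 2 (p.gm.nabla (p.sp.P 0 X) (p.sp.P 1 Y)) = 0 := by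
        rw [hspan0 X, hspan1 Y, p.gm.nabla_fsmul_left, p.gm.nabla_leibniz, ← ha_def, ha0,
          aux_fsmul_zero_vf, add_zero, p.sp.P_fsmul, p.sp.P_fsmul, hP2ξ2,
          aux_fsmul_zero_vf, aux_fsmul_zero_vf]
      have e2 : p.sp.P 2 (p.gm.nabla (p.sp.P 1 Y) (p.sp.P 0 X)) = 0 := by
        rw [hspan0 X, hspan1 Y, p.gm.nabla_fsmul_left, p.gm.nabla_leibniz, ← hb_def, hb0,
          aux_fsmul_zero_vf, add_zero, p.sp.P_fsmul, p.sp.P_fsmul, hP2ξ1,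
          aux_fsmul_zero_vf, aux_fsmul_zero_vf]
      have hPp2P0 : p.sp.Pp 2 (p.sp.P 0 X) = p.sp.P 0 X := by
        show p.sp.P 0 X - p.sp.P 2 (p.sp.P 0 X) = p.sp.P 0 X
        rw [p.sp.P_orth 2 0 X hne20, sub_zero]
      have hPp2P1 : p.sp.Pp 2 (p.sp.P 1 Y) = p.sp.P 1 Y := by
        show p.sp.P 1 Y - p.sp.P 2 (p.sp.P 1 Y) = p.sp.P 1 Y
        rw [p.sp.P_orth 2 1 Y hne21, sub_zero]
      simp only [Split3.Tt]
      rw [hPp2P0, hPp2P1, aux_P_sub, e1, e2, sub_zero, smul_zero]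
end
end

section
/- Let M = F × B carry the twisted product metric g = g_F + e^{2f}g_B for a smooth function f: M → ℝ, let D1, D2 be the lifts to M of two complementary orthogonal distributions N1, N2 on (F,g_F), and let D3 be the lift of TB. Then the distributions D1, D2, D3 are pairwise mixed integrable and pairwise mixed totally geodesic. Moreover, if N1 and N2 are integrable, then D1, D2, D3 are all integrable. -/
open scoped BigOperators
noncomputable section

section Helpers

/-- An additive map sends `0` to `0`. -/
lemma hom_zero' {A G : Type*} [AddZeroClass A] [AddCommGroup G] (f : A → G)
    (h : ∀ x y, f (x + y) = f x + f y) : f 0 = 0 :=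
  (AddMonoidHom.mk' f h).map_zero

/-- An additive map commutes with finite sums. -/
lemma hom_sum' {A G : Type*} [AddCommMonoid A] [AddCommGroup G] (f : A → G)
    (h : ∀ x y, f (x + y) = f x + f y) {n : ℕ} (g : Fin n → A) :
    f (∑ k, g k) = ∑ k, f (g k) :=
  map_sum (AddMonoidHom.mk' f h) g Finset.univ

/-- An additive map commutes with subtraction. -/
lemma hom_sub' {A G : Type*} [AddCommGroup A] [AddCommGroup G] (f : A → G)
    (h : ∀ x y, f (x + y) = f x + f y) (x y : A) :
    f (x - y) = f x - f y :=
  map_sub (AddMonoidHom.mk' f h) x y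

end Helpers

/-- On a twisted product `M = F × B` with metric
`g = g_F + e^{2f} g_B`, the lifts `D₁, D₂` of complementary orthogonal
distributions `N₁, N₂` on `F` and the lift `D₃` of `TB` are pairwise mixed
integrable and pairwise mixed totally geodesic; if moreover `N₁` and `N₂` are
integrable, then `D₁, D₂, D₃` are all integrable. -/
theorem twisted_product_mixed_integrable_mixed_totally_geodesic
    (F B : Type) (Vf : SmoothVF F) (Vb : SmoothVF B) (Vm : SmoothVF (F × B))
    (gF : RMetric Vf) (gB : RMetric Vb) (gm : RMetric Vm)
    (f : F × B → ℝ)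
    -- the orthoprojectors onto N₁ and N₂ on F
    (Q : Fin 2 → Vf.VF → Vf.VF)
    (hQadd : ∀ i X Y, Q i (X + Y) = Q i X + Q i Y)
    (hQidem : ∀ i X, Q i (Q i X) = Q i X)
    (hQorth : ∀ i j X, i ≠ j → Q i (Q j X) = 0)
    (hQsum : ∀ X, Q 0 X + Q 1 X = X)
    (hQselfadj : ∀ i X Y, gF.g (Q i X) Y = gF.g X (Q i Y))
    -- the three distributions D₁, D₂, D₃ on M = F × B
    (s : Split3 gm)
    -- horizontal and vertical lifts of vector fields
    (liftF : Vf.VF → Vm.VF) (liftB : Vb.VF → Vm.VF)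
    (hlF_add : ∀ X Y, liftF (X + Y) = liftF X + liftF Y)
    (hlB_add : ∀ X Y, liftB (X + Y) = liftB X + liftB Y)
    (hlF_fsmul : ∀ (φ : F → ℝ) X, liftF (Vf.fsmul φ X) = Vm.fsmul (fun q => φ q.1) (liftF X))
    (hlB_fsmul : ∀ (ψ : B → ℝ) X, liftB (Vb.fsmul ψ X) = Vm.fsmul (fun q => ψ q.2) (liftB X))
    (hbrFF : ∀ X Y, Vm.bracket (liftF X) (liftF Y) = liftF (Vf.bracket X Y))
    (hbrBB : ∀ X Y, Vm.bracket (liftB X) (liftB Y) = liftB (Vb.bracket X Y))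
    (hbrFB : ∀ X Y, Vm.bracket (liftF X) (liftB Y) = 0)
    -- the twisted product metric g = g_F + e^{2f} g_B
    (hgFF : ∀ X Y, gm.g (liftF X) (liftF Y) = fun q => gF.g X Y q.1)
    (hgBB : ∀ X Y, gm.g (liftB X) (liftB Y) = fun q => Real.exp (2 * f q) * gB.g X Y q.2)
    (hgFB : ∀ X Y, gm.g (liftF X) (liftB Y) = 0)
    (hddF : ∀ X (φ : F → ℝ), Vm.dd (liftF X) (fun q => φ q.1) = fun q => Vf.dd X φ q.1)
    (hddB : ∀ X (ψ : B → ℝ), Vm.dd (liftB X) (fun q => ψ q.2) = fun q => Vb.dd X ψ q.2)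
    (hddFB : ∀ X (ψ : B → ℝ), Vm.dd (liftF X) (fun q => ψ q.2) = 0)
    (hddBF : ∀ X (φ : F → ℝ), Vm.dd (liftB X) (fun q => φ q.1) = 0)
    -- D₁, D₂ are the lifts of N₁, N₂, and D₃ is the lift of TB
    (hP0 : ∀ X, s.P 0 (liftF X) = liftF (Q 0 X))
    (hP1 : ∀ X, s.P 1 (liftF X) = liftF (Q 1 X))
    (hP2F : ∀ X, s.P 2 (liftF X) = 0)
    (hP2B : ∀ X, s.P 2 (liftB X) = liftB X)
    -- every vector field on M is a functional combination of lifted fields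
    (hspan : ∀ Z : Vm.VF, ∃ (n : ℕ) (φ : Fin n → (F × B → ℝ)) (W : Fin n → Vm.VF),
        (∀ k, (∃ X, W k = liftF X) ∨ (∃ X, W k = liftB X))
        ∧ Z = ∑ k, Vm.fsmul (φ k) (W k)) :
    ((∀ X Y, s.mT 2 0 1 X Y = 0) ∧ (∀ X Y, s.mT 1 0 2 X Y = 0) ∧ (∀ X Y, s.mT 0 1 2 X Y = 0)
      ∧ (∀ X Y, s.mh 2 0 1 X Y = 0) ∧ (∀ X Y, s.mh 1 0 2 X Y = 0) ∧ (∀ X Y, s.mh 0 1 2 X Y = 0))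
    ∧ ((∀ X Y, Q 1 (Vf.bracket (Q 0 X) (Q 0 Y)) = 0) →
        (∀ X Y, Q 0 (Vf.bracket (Q 1 X) (Q 1 Y)) = 0) →
        ∀ (i : Fin 3) X Y, s.T i X Y = 0) := by
  classical
  -- basic zero / additivity facts
  have g0 : ∀ T : Vm.VF, gm.g 0 T = 0 := fun T =>
    hom_zero' (fun z => gm.g z T) (fun a b => gm.g_add_left a b T)
  have g0r : ∀ X : Vm.VF, gm.g X 0 = 0 := fun X => by rw [gm.g_symm]; exact g0 X
  have gsub : ∀ x y T : Vm.VF, gm.g (x - y) T = gm.g x T - gm.g y T := fun x y T =>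
    hom_sub' (fun z => gm.g z T) (fun a b => gm.g_add_left a b T) x y
  have gsumL : ∀ (T : Vm.VF) {n : ℕ} (v : Fin n → Vm.VF),
      gm.g (∑ k, v k) T = ∑ k, gm.g (v k) T := fun T {n} v =>
    hom_sum' (fun z => gm.g z T) (fun a b => gm.g_add_left a b T) v
  have nabL : ∀ (Y : Vm.VF) {n : ℕ} (v : Fin n → Vm.VF),
      gm.nabla (∑ k, v k) Y = ∑ k, gm.nabla (v k) Y := fun Y {n} v =>
    hom_sum' (fun z => gm.nabla z Y) (fun a b => gm.nabla_add_left a b Y) v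
  have nabR : ∀ (X : Vm.VF) {n : ℕ} (v : Fin n → Vm.VF),
      gm.nabla X (∑ k, v k) = ∑ k, gm.nabla X (v k) := fun X {n} v =>
    hom_sum' (fun z => gm.nabla X z) (gm.nabla_add_right X) v
  have Psum : ∀ (i : Fin 3) {n : ℕ} (v : Fin n → Vm.VF),
      s.P i (∑ k, v k) = ∑ k, s.P i (v k) := fun i {n} v =>
    hom_sum' (s.P i) (s.P_add i) v
  have P0z : ∀ i : Fin 3, s.P i 0 = 0 := fun i => hom_zero' (s.P i) (s.P_add i)
  have dd0 : ∀ X : Vm.VF, Vm.dd X 0 = 0 := fun X => hom_zero' (Vm.dd X) (Vm.dd_add X)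
  have liftF0 : liftF 0 = 0 := hom_zero' liftF hlF_add
  have liftB0 : liftB 0 = 0 := hom_zero' liftB hlB_add
  have Q0z : ∀ i, Q i 0 = 0 := fun i => hom_zero' (Q i) (hQadd i)
  have gF0l : ∀ Y, gF.g 0 Y = 0 := fun Y =>
    hom_zero' (fun z => gF.g z Y) (fun a b => gF.g_add_left a b Y)
  have gF0r : ∀ X, gF.g X 0 = 0 := fun X => by rw [gF.g_symm]; exact gF0l X
  -- orthogonality facts
  have gBF : ∀ ξ C, gm.g (liftB ξ) (liftF C) = 0 := fun ξ C => by
    rw [gm.g_symm, hgFB]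
  have gQQ : ∀ (i j : Fin 2), i ≠ j → ∀ A C, gm.g (liftF (Q i A)) (liftF (Q j C)) = 0 := by
    intro i j hij A C
    rw [hgFF]
    have hz : gF.g (Q i A) (Q j C) = 0 := by
      rw [hQselfadj i A (Q j C), hQorth i j C hij]; exact gF0r A
    funext q
    exact congrFun hz q.1
  -- torsion-free facts
  have tfFB : ∀ A ξ, gm.nabla (liftB ξ) (liftF A) = gm.nabla (liftF A) (liftB ξ) := by
    intro A ξ
    have h := gm.torsion_free (liftF A) (liftB ξ)
    rw [hbrFB] at h
    exact (sub_eq_zero.mp h).symm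
  -- key scalar lemmas (Levi-Civita computation)
  have L2 : ∀ A ξ C, gm.g (gm.nabla (liftF A) (liftB ξ)) (liftF C) = 0 := by
    intro A ξ C
    have mc1 := gm.metric_compat (liftF A) (liftF C) (liftB ξ)
    rw [hgFB, dd0, gm.g_symm (liftF C)] at mc1
    have mc2 := gm.metric_compat (liftF C) (liftF A) (liftB ξ)
    rw [hgFB, dd0, gm.g_symm (liftF A)] at mc2
    have mc3 := gm.metric_compat (liftB ξ) (liftF A) (liftF C)
    rw [hgFF, hddBF ξ (gF.g A C), tfFB A ξ, tfFB C ξ, gm.g_symm (liftF A)] at mc3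
    have tf2 : gm.g (gm.nabla (liftF A) (liftF C)) (liftB ξ)
        - gm.g (gm.nabla (liftF C) (liftF A)) (liftB ξ) = 0 := by
      rw [← gsub, gm.torsion_free, hbrFF, hgFB]
    funext q
    have h1 := congrFun mc1 q
    have h2 := congrFun mc2 q
    have h3 := congrFun mc3 q
    have h4 := congrFun tf2 q
    simp only [Pi.add_apply, Pi.sub_apply, Pi.zero_apply] at h1 h2 h3 h4 ⊢
    linarith
  have L1 : ∀ A C ξ, gm.g (gm.nabla (liftF A) (liftF C)) (liftB ξ) = 0 := by
    intro A C ξ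
    have mc1 := gm.metric_compat (liftF A) (liftF C) (liftB ξ)
    rw [hgFB, dd0, gm.g_symm (liftF C), L2 A ξ C, add_zero] at mc1
    exact mc1.symm
  have L3 : ∀ ξ A C, gm.g (gm.nabla (liftB ξ) (liftF A)) (liftF C) = 0 := by
    intro ξ A C
    rw [tfFB]; exact L2 A ξ C
  have LBB : ∀ ξ η C, gm.g (gm.nabla (liftB ξ) (liftB η)) (liftF C)
      = gm.g (gm.nabla (liftB η) (liftB ξ)) (liftF C) := by
    intro ξ η C
    have h : gm.g (gm.nabla (liftB ξ) (liftB η) - gm.nabla (liftB η) (liftB ξ)) (liftF C)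
        = 0 := by rw [gm.torsion_free, hbrBB, gBF]
    rw [gsub] at h
    exact sub_eq_zero.mp h
  have LFF : ∀ (i j : Fin 2), (∀ X Y, Q j (Vf.bracket (Q i X) (Q i Y)) = 0) → ∀ A B' C,
      gm.g (gm.nabla (liftF (Q i A)) (liftF (Q i B'))) (liftF (Q j C))
      = gm.g (gm.nabla (liftF (Q i B')) (liftF (Q i A))) (liftF (Q j C)) := by
    intro i j hbr A B' C
    have h : gm.g (gm.nabla (liftF (Q i A)) (liftF (Q i B'))
        - gm.nabla (liftF (Q i B')) (liftF (Q i A))) (liftF (Q j C)) = 0 := by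
      rw [gm.torsion_free, hbrFF, hgFF]
      have hz : gF.g (Vf.bracket (Q i A) (Q i B')) (Q j C) = 0 := by
        rw [← hQselfadj j (Vf.bracket (Q i A) (Q i B')) C, hbr A B']
        exact gF0l C
      funext q
      exact congrFun hz q.1
    rw [gsub] at h
    exact sub_eq_zero.mp h
  -- the core expansion lemma
  have CORE : ∀ (T : Vm.VF) (n m : ℕ) (φ : Fin n → (F × B → ℝ)) (Xv : Fin n → Vm.VF)
      (ψ : Fin m → (F × B → ℝ)) (Yv : Fin m → Vm.VF),
      (∀ l, gm.g (Yv l) T = 0) →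
      gm.g (gm.nabla (∑ k, Vm.fsmul (φ k) (Xv k)) (∑ l, Vm.fsmul (ψ l) (Yv l))) T
        = ∑ k, ∑ l, φ k * (ψ l * gm.g (gm.nabla (Xv k) (Yv l)) T) := by
    intro T n m φ Xv ψ Yv hY
    have hk : ∀ k, gm.g (gm.nabla (Xv k) (∑ l, Vm.fsmul (ψ l) (Yv l))) T
        = ∑ l, ψ l * gm.g (gm.nabla (Xv k) (Yv l)) T := by
      intro k
      rw [nabR, gsumL]
      refine Finset.sum_congr rfl fun l _ => ?_
      rw [gm.nabla_leibniz, gm.g_add_left, gm.g_fsmul_left, gm.g_fsmul_left, hY l,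
        mul_zero, zero_add]
    rw [nabL, gsumL]
    refine Finset.sum_congr rfl fun k _ => ?_
    rw [gm.nabla_fsmul_left, gm.g_fsmul_left, hk k, Finset.mul_sum]
  -- vanishing of the mixed nabla terms
  have ZFFB : ∀ (n m : ℕ) (φ : Fin n → (F × B → ℝ)) (Av : Fin n → Vf.VF)
      (ψ : Fin m → (F × B → ℝ)) (Bv : Fin m → Vf.VF) (ξ : Vb.VF),
      gm.g (gm.nabla (∑ k, Vm.fsmul (φ k) (liftF (Av k)))
        (∑ l, Vm.fsmul (ψ l) (liftF (Bv l)))) (liftB ξ) = 0 := by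
    intro n m φ Av ψ Bv ξ
    refine (CORE (liftB ξ) n m φ (fun k => liftF (Av k)) ψ (fun l => liftF (Bv l))
      (fun l => hgFB (Bv l) ξ)).trans ?_
    refine Finset.sum_eq_zero fun k _ => Finset.sum_eq_zero fun l _ => ?_
    rw [L1, mul_zero, mul_zero]
  have ZFBF : ∀ (n m : ℕ) (φ : Fin n → (F × B → ℝ)) (Av : Fin n → Vf.VF)
      (ψ : Fin m → (F × B → ℝ)) (ξv : Fin m → Vb.VF) (C : Vf.VF),
      gm.g (gm.nabla (∑ k, Vm.fsmul (φ k) (liftF (Av k)))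
        (∑ l, Vm.fsmul (ψ l) (liftB (ξv l)))) (liftF C) = 0 := by
    intro n m φ Av ψ ξv C
    refine (CORE (liftF C) n m φ (fun k => liftF (Av k)) ψ (fun l => liftB (ξv l))
      (fun l => gBF (ξv l) C)).trans ?_
    refine Finset.sum_eq_zero fun k _ => Finset.sum_eq_zero fun l _ => ?_
    rw [L2, mul_zero, mul_zero]
  have ZBFF : ∀ (i j : Fin 2), i ≠ j → ∀ (n m : ℕ) (φ : Fin n → (F × B → ℝ))
      (ξv : Fin n → Vb.VF) (ψ : Fin m → (F × B → ℝ)) (Bv : Fin m → Vf.VF) (C : Vf.VF),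
      gm.g (gm.nabla (∑ k, Vm.fsmul (φ k) (liftB (ξv k)))
        (∑ l, Vm.fsmul (ψ l) (liftF (Q i (Bv l))))) (liftF (Q j C)) = 0 := by
    intro i j hij n m φ ξv ψ Bv C
    refine (CORE (liftF (Q j C)) n m φ (fun k => liftB (ξv k)) ψ
      (fun l => liftF (Q i (Bv l))) (fun l => gQQ i j hij (Bv l) C)).trans ?_
    refine Finset.sum_eq_zero fun k _ => Finset.sum_eq_zero fun l _ => ?_
    rw [L3, mul_zero, mul_zero]
  -- the antisymmetrized (bracket) vanishing lemma
  have SWAP : ∀ (T : Vm.VF) (n m : ℕ) (φ : Fin n → (F × B → ℝ)) (Xv : Fin n → Vm.VF)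
      (ψ : Fin m → (F × B → ℝ)) (Yv : Fin m → Vm.VF),
      (∀ l, gm.g (Yv l) T = 0) → (∀ k, gm.g (Xv k) T = 0) →
      (∀ k l, gm.g (gm.nabla (Xv k) (Yv l)) T = gm.g (gm.nabla (Yv l) (Xv k)) T) →
      gm.g (gm.nabla (∑ k, Vm.fsmul (φ k) (Xv k)) (∑ l, Vm.fsmul (ψ l) (Yv l))
        - gm.nabla (∑ l, Vm.fsmul (ψ l) (Yv l)) (∑ k, Vm.fsmul (φ k) (Xv k))) T = 0 := by
    intro T n m φ Xv ψ Yv hY hX hbr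
    rw [gsub, CORE T n m φ Xv ψ Yv hY, CORE T m n ψ Yv φ Xv hX, sub_eq_zero,
      Finset.sum_comm]
    refine Finset.sum_congr rfl fun l _ => Finset.sum_congr rfl fun k _ => ?_
    rw [hbr k l]; ring
  -- span facts for the projections
  have PB0 : ∀ X, s.P 0 (liftB X) = 0 ∧ s.P 1 (liftB X) = 0 := by
    intro X
    have h := s.P_sum (liftB X)
    rw [hP2B] at h
    have h01 : s.P 0 (liftB X) + s.P 1 (liftB X) = 0 := add_eq_right.mp h
    constructor
    · have h0 := congrArg (s.P 0) h01
      rw [s.P_add, s.P_idem, s.P_orth 0 1 _ (by decide), add_zero, P0z] at h0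
      exact h0
    · have h1 := congrArg (s.P 1) h01
      rw [s.P_add, s.P_idem, s.P_orth 1 0 _ (by decide), zero_add, P0z] at h1
      exact h1
  have hFS0 : ∀ Z, ∃ (n : ℕ) (φ : Fin n → (F × B → ℝ)) (A : Fin n → Vf.VF),
      s.P 0 Z = ∑ k, Vm.fsmul (φ k) (liftF (Q 0 (A k))) := by
    intro Z
    obtain ⟨n, φ, W, hW, hZ⟩ := hspan Z
    have hch : ∀ k, ∃ A, s.P 0 (W k) = liftF (Q 0 A) := by
      intro k
      rcases hW k with ⟨X, hX⟩ | ⟨X, hX⟩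
      · exact ⟨X, by rw [hX, hP0]⟩
      · exact ⟨0, by rw [hX, (PB0 X).1, Q0z, liftF0]⟩
    choose A hA using hch
    refine ⟨n, φ, A, ?_⟩
    rw [hZ, Psum]
    exact Finset.sum_congr rfl fun k _ => by rw [s.P_fsmul, hA k]
  have hFS1 : ∀ Z, ∃ (n : ℕ) (φ : Fin n → (F × B → ℝ)) (A : Fin n → Vf.VF),
      s.P 1 Z = ∑ k, Vm.fsmul (φ k) (liftF (Q 1 (A k))) := by
    intro Z
    obtain ⟨n, φ, W, hW, hZ⟩ := hspan Z
    have hch : ∀ k, ∃ A, s.P 1 (W k) = liftF (Q 1 A) := by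
      intro k
      rcases hW k with ⟨X, hX⟩ | ⟨X, hX⟩
      · exact ⟨X, by rw [hX, hP1]⟩
      · exact ⟨0, by rw [hX, (PB0 X).2, Q0z, liftF0]⟩
    choose A hA using hch
    refine ⟨n, φ, A, ?_⟩
    rw [hZ, Psum]
    exact Finset.sum_congr rfl fun k _ => by rw [s.P_fsmul, hA k]
  have hBS2 : ∀ Z, ∃ (n : ℕ) (φ : Fin n → (F × B → ℝ)) (A : Fin n → Vb.VF),
      s.P 2 Z = ∑ k, Vm.fsmul (φ k) (liftB (A k)) := by
    intro Z
    obtain ⟨n, φ, W, hW, hZ⟩ := hspan Z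
    have hch : ∀ k, ∃ A, s.P 2 (W k) = liftB A := by
      intro k
      rcases hW k with ⟨X, hX⟩ | ⟨X, hX⟩
      · exact ⟨0, by rw [hX, hP2F, liftB0]⟩
      · exact ⟨X, by rw [hX, hP2B]⟩
    choose A hA using hch
    refine ⟨n, φ, A, ?_⟩
    rw [hZ, Psum]
    exact Finset.sum_congr rfl fun k _ => by rw [s.P_fsmul, hA k]
  -- right linearity of the metric over spans
  have gR : ∀ (Wv : Vm.VF) {n : ℕ} (ψ : Fin n → (F × B → ℝ)) (v : Fin n → Vm.VF),
      gm.g Wv (∑ l, Vm.fsmul (ψ l) (v l)) = ∑ l, ψ l * gm.g Wv (v l) := by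
    intro Wv n ψ v
    rw [gm.g_symm, gsumL]
    exact Finset.sum_congr rfl fun l _ => by rw [gm.g_fsmul_left, gm.g_symm]
  -- vanishing criteria for the projections
  have Pz0 : ∀ Wv, (∀ C, gm.g Wv (liftF (Q 0 C)) = 0) → s.P 0 Wv = 0 := by
    intro Wv hW
    apply gm.g_definite
    rw [s.P_selfadj 0 Wv (s.P 0 Wv), s.P_idem]
    obtain ⟨n, φ, A, hA⟩ := hFS0 Wv
    rw [hA, gR]
    exact Finset.sum_eq_zero fun l _ => by rw [hW, mul_zero]
  have Pz1 : ∀ Wv, (∀ C, gm.g Wv (liftF (Q 1 C)) = 0) → s.P 1 Wv = 0 := by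
    intro Wv hW
    apply gm.g_definite
    rw [s.P_selfadj 1 Wv (s.P 1 Wv), s.P_idem]
    obtain ⟨n, φ, A, hA⟩ := hFS1 Wv
    rw [hA, gR]
    exact Finset.sum_eq_zero fun l _ => by rw [hW, mul_zero]
  have Pz2 : ∀ Wv, (∀ ξ, gm.g Wv (liftB ξ) = 0) → s.P 2 Wv = 0 := by
    intro Wv hW
    apply gm.g_definite
    rw [s.P_selfadj 2 Wv (s.P 2 Wv), s.P_idem]
    obtain ⟨n, φ, A, hA⟩ := hBS2 Wv
    rw [hA, gR]
    exact Finset.sum_eq_zero fun l _ => by rw [hW, mul_zero]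
  -- complement projector facts
  have ppP : ∀ (i j : Fin 3), i ≠ j → ∀ X, s.Pp i (s.P j X) = s.P j X := by
    intro i j h X
    show s.P j X - s.P i (s.P j X) = s.P j X
    rw [s.P_orth i j X h, sub_zero]
  have pp0 : ∀ Wv, s.P 1 Wv = 0 → s.P 2 Wv = 0 → s.Pp 0 Wv = 0 := by
    intro Wv h1 h2
    have h := s.P_sum Wv
    have h' : Wv = s.P 0 Wv := by
      conv_lhs => rw [← h]
      rw [h1, h2, add_zero, add_zero]
    show Wv - s.P 0 Wv = 0
    rw [← h', sub_self]
  have pp1 : ∀ Wv, s.P 0 Wv = 0 → s.P 2 Wv = 0 → s.Pp 1 Wv = 0 := by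
    intro Wv h0 h2
    have h := s.P_sum Wv
    have h' : Wv = s.P 1 Wv := by
      conv_lhs => rw [← h]
      rw [h0, h2, zero_add, add_zero]
    show Wv - s.P 1 Wv = 0
    rw [← h', sub_self]
  have pp2 : ∀ Wv, s.P 0 Wv = 0 → s.P 1 Wv = 0 → s.Pp 2 Wv = 0 := by
    intro Wv h0 h1
    have h := s.P_sum Wv
    have h' : Wv = s.P 2 Wv := by
      conv_lhs => rw [← h]
      rw [h0, h1, zero_add, zero_add]
    show Wv - s.P 2 Wv = 0
    rw [← h', sub_self]
  constructor
  · refine ⟨?_, ?_, ?_, ?_, ?_, ?_⟩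
    · -- mT 2 0 1
      intro X Y
      simp only [Split3.mT, Split3.Tt]
      simp only [ppP 2 0 (by decide), ppP 2 1 (by decide)]
      obtain ⟨n, φ, A, hA⟩ := hFS0 X
      obtain ⟨m, ψ, Bv, hB⟩ := hFS1 Y
      obtain ⟨n', φ', A', hA'⟩ := hFS1 X
      obtain ⟨m', ψ', Bv', hB'⟩ := hFS0 Y
      have z1 : s.P 2 (gm.nabla (s.P 0 X) (s.P 1 Y) - gm.nabla (s.P 1 Y) (s.P 0 X)) = 0 := by
        apply Pz2; intro ξ
        rw [gsub, hA, hB, ZFFB, ZFFB, sub_zero]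
      have z2 : s.P 2 (gm.nabla (s.P 1 X) (s.P 0 Y) - gm.nabla (s.P 0 Y) (s.P 1 X)) = 0 := by
        apply Pz2; intro ξ
        rw [gsub, hA', hB', ZFFB, ZFFB, sub_zero]
      rw [z1, z2, smul_zero, add_zero]
    · -- mT 1 0 2
      intro X Y
      simp only [Split3.mT, Split3.Tt]
      simp only [ppP 1 0 (by decide), ppP 1 2 (by decide)]
      obtain ⟨n, φ, A, hA⟩ := hFS0 X
      obtain ⟨m, ψ, Bv, hB⟩ := hBS2 Y
      obtain ⟨n', φ', A', hA'⟩ := hBS2 X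
      obtain ⟨m', ψ', Bv', hB'⟩ := hFS0 Y
      have z1 : s.P 1 (gm.nabla (s.P 0 X) (s.P 2 Y) - gm.nabla (s.P 2 Y) (s.P 0 X)) = 0 := by
        apply Pz1; intro C
        rw [gsub, hA, hB, ZFBF, ZBFF 0 1 (by decide), sub_zero]
      have z2 : s.P 1 (gm.nabla (s.P 2 X) (s.P 0 Y) - gm.nabla (s.P 0 Y) (s.P 2 X)) = 0 := by
        apply Pz1; intro C
        rw [gsub, hA', hB', ZBFF 0 1 (by decide), ZFBF, sub_zero]
      rw [z1, z2, smul_zero, add_zero]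
    · -- mT 0 1 2
      intro X Y
      simp only [Split3.mT, Split3.Tt]
      simp only [ppP 0 1 (by decide), ppP 0 2 (by decide)]
      obtain ⟨n, φ, A, hA⟩ := hFS1 X
      obtain ⟨m, ψ, Bv, hB⟩ := hBS2 Y
      obtain ⟨n', φ', A', hA'⟩ := hBS2 X
      obtain ⟨m', ψ', Bv', hB'⟩ := hFS1 Y
      have z1 : s.P 0 (gm.nabla (s.P 1 X) (s.P 2 Y) - gm.nabla (s.P 2 Y) (s.P 1 X)) = 0 := by
        apply Pz0; intro C
        rw [gsub, hA, hB, ZFBF, ZBFF 1 0 (by decide), sub_zero]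
      have z2 : s.P 0 (gm.nabla (s.P 2 X) (s.P 1 Y) - gm.nabla (s.P 1 Y) (s.P 2 X)) = 0 := by
        apply Pz0; intro C
        rw [gsub, hA', hB', ZBFF 1 0 (by decide), ZFBF, sub_zero]
      rw [z1, z2, smul_zero, add_zero]
    · -- mh 2 0 1
      intro X Y
      simp only [Split3.mh, Split3.ht]
      simp only [ppP 2 0 (by decide), ppP 2 1 (by decide)]
      obtain ⟨n, φ, A, hA⟩ := hFS0 X
      obtain ⟨m, ψ, Bv, hB⟩ := hFS1 Y
      obtain ⟨n', φ', A', hA'⟩ := hFS1 X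
      obtain ⟨m', ψ', Bv', hB'⟩ := hFS0 Y
      have z1 : s.P 2 (gm.nabla (s.P 0 X) (s.P 1 Y) + gm.nabla (s.P 1 Y) (s.P 0 X)) = 0 := by
        apply Pz2; intro ξ
        rw [gm.g_add_left, hA, hB, ZFFB, ZFFB, add_zero]
      have z2 : s.P 2 (gm.nabla (s.P 1 X) (s.P 0 Y) + gm.nabla (s.P 0 Y) (s.P 1 X)) = 0 := by
        apply Pz2; intro ξ
        rw [gm.g_add_left, hA', hB', ZFFB, ZFFB, add_zero]
      rw [z1, z2, smul_zero, add_zero]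
    · -- mh 1 0 2
      intro X Y
      simp only [Split3.mh, Split3.ht]
      simp only [ppP 1 0 (by decide), ppP 1 2 (by decide)]
      obtain ⟨n, φ, A, hA⟩ := hFS0 X
      obtain ⟨m, ψ, Bv, hB⟩ := hBS2 Y
      obtain ⟨n', φ', A', hA'⟩ := hBS2 X
      obtain ⟨m', ψ', Bv', hB'⟩ := hFS0 Y
      have z1 : s.P 1 (gm.nabla (s.P 0 X) (s.P 2 Y) + gm.nabla (s.P 2 Y) (s.P 0 X)) = 0 := by
        apply Pz1; intro C
        rw [gm.g_add_left, hA, hB, ZFBF, ZBFF 0 1 (by decide), add_zero]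
      have z2 : s.P 1 (gm.nabla (s.P 2 X) (s.P 0 Y) + gm.nabla (s.P 0 Y) (s.P 2 X)) = 0 := by
        apply Pz1; intro C
        rw [gm.g_add_left, hA', hB', ZBFF 0 1 (by decide), ZFBF, add_zero]
      rw [z1, z2, smul_zero, add_zero]
    · -- mh 0 1 2
      intro X Y
      simp only [Split3.mh, Split3.ht]
      simp only [ppP 0 1 (by decide), ppP 0 2 (by decide)]
      obtain ⟨n, φ, A, hA⟩ := hFS1 X
      obtain ⟨m, ψ, Bv, hB⟩ := hBS2 Y
      obtain ⟨n', φ', A', hA'⟩ := hBS2 X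
      obtain ⟨m', ψ', Bv', hB'⟩ := hFS1 Y
      have z1 : s.P 0 (gm.nabla (s.P 1 X) (s.P 2 Y) + gm.nabla (s.P 2 Y) (s.P 1 X)) = 0 := by
        apply Pz0; intro C
        rw [gm.g_add_left, hA, hB, ZFBF, ZBFF 1 0 (by decide), add_zero]
      have z2 : s.P 0 (gm.nabla (s.P 2 X) (s.P 1 Y) + gm.nabla (s.P 1 Y) (s.P 2 X)) = 0 := by
        apply Pz0; intro C
        rw [gm.g_add_left, hA', hB', ZBFF 1 0 (by decide), ZFBF, add_zero]
      rw [z1, z2, smul_zero, add_zero]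
  · -- second part: integrability
    intro hint1 hint2 i X Y
    fin_cases i
    · show s.T 0 X Y = 0
      simp only [Split3.T]
      obtain ⟨n, φ, A, hA⟩ := hFS0 X
      obtain ⟨m, ψ, Bv, hB⟩ := hFS0 Y
      have z1 : s.P 1 (gm.nabla (s.P 0 X) (s.P 0 Y) - gm.nabla (s.P 0 Y) (s.P 0 X)) = 0 := by
        apply Pz1; intro C
        rw [hA, hB]
        exact SWAP (liftF (Q 1 C)) n m φ _ ψ _
          (fun l => gQQ 0 1 (by decide) (Bv l) C)
          (fun k => gQQ 0 1 (by decide) (A k) C)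
          (fun k l => LFF 0 1 hint1 (A k) (Bv l) C)
      have z2 : s.P 2 (gm.nabla (s.P 0 X) (s.P 0 Y) - gm.nabla (s.P 0 Y) (s.P 0 X)) = 0 := by
        apply Pz2; intro ξ
        rw [gsub, hA, hB, ZFFB, ZFFB, sub_zero]
      rw [pp0 _ z1 z2, smul_zero]
    · show s.T 1 X Y = 0
      simp only [Split3.T]
      obtain ⟨n, φ, A, hA⟩ := hFS1 X
      obtain ⟨m, ψ, Bv, hB⟩ := hFS1 Y
      have z1 : s.P 0 (gm.nabla (s.P 1 X) (s.P 1 Y) - gm.nabla (s.P 1 Y) (s.P 1 X)) = 0 := by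
        apply Pz0; intro C
        rw [hA, hB]
        exact SWAP (liftF (Q 0 C)) n m φ _ ψ _
          (fun l => gQQ 1 0 (by decide) (Bv l) C)
          (fun k => gQQ 1 0 (by decide) (A k) C)
          (fun k l => LFF 1 0 hint2 (A k) (Bv l) C)
      have z2 : s.P 2 (gm.nabla (s.P 1 X) (s.P 1 Y) - gm.nabla (s.P 1 Y) (s.P 1 X)) = 0 := by
        apply Pz2; intro ξ
        rw [gsub, hA, hB, ZFFB, ZFFB, sub_zero]
      rw [pp1 _ z1 z2, smul_zero]
    · show s.T 2 X Y = 0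
      simp only [Split3.T]
      obtain ⟨n, φ, A, hA⟩ := hBS2 X
      obtain ⟨m, ψ, Bv, hB⟩ := hBS2 Y
      have z1 : s.P 0 (gm.nabla (s.P 2 X) (s.P 2 Y) - gm.nabla (s.P 2 Y) (s.P 2 X)) = 0 := by
        apply Pz0; intro C
        rw [hA, hB]
        exact SWAP (liftF (Q 0 C)) n m φ _ ψ _
          (fun l => gBF (Bv l) (Q 0 C))
          (fun k => gBF (A k) (Q 0 C))
          (fun k l => LBB (A k) (Bv l) (Q 0 C))
      have z2 : s.P 1 (gm.nabla (s.P 2 X) (s.P 2 Y) - gm.nabla (s.P 2 Y) (s.P 2 X)) = 0 := by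
        apply Pz1; intro C
        rw [hA, hB]
        exact SWAP (liftF (Q 1 C)) n m φ _ ψ _
          (fun l => gBF (Bv l) (Q 1 C))
          (fun k => gBF (A k) (Q 1 C))
          (fun k l => LBB (A k) (Bv l) (Q 1 C))
      rw [pp2 _ z1 z2, smul_zero]
end
end

section
/- Suppose the distributions D1, D2, D3 on (M,g), with TM = D1 ⊕ D2 ⊕ D3, are integrable, pairwise mixed totally geodesic and pairwise mixed integrable, and P₃h₁ = P₃h₂ = 0. Then for all X ∈ D1 and Y ∈ D3: A_{1,Y} = 0 (hence Div A_{1,Y} = 0), A_{12,Y} = 0 (hence Div A_{12,Y} = 0), g(∇_X H₁, Y) = 0, (Div h̃₂)(X,Y) = 0, and P₃(H₁ + H₂) = 0; consequently every term of the Euler-Lagrange equation of J_{D1,D2} corresponding to variations with B(X,Y) = B(P₁X,P₃Y) + B(P₃X,P₁Y) vanishes. -/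
open scoped BigOperators
noncomputable section

/-- The left-hand side of the Euler-Lagrange equation for variations with
`B = B|_{(D₁×D₃)∪(D₃×D₁)}`, evaluated on `X ∈ D₁`, `Y ∈ D₃`. -/
def EL13 {M : Type} {V : SmoothVF M} (p : Pkg V) (X Y : V.VF) : M → ℝ :=
  let G := p.gm.g
  let s := p.sp
  let E := p.E
  ( 2 * (∑ a : p.ι 0, ∑ i : p.ι 1,
      G (s.mh 0 1 2 (E 1 i) Y) (E 0 a) * G (s.T 0 (E 0 a) X) (E 1 i))
  + 2 * (G (s.T 0 X (s.P 0 (p.H 1 + p.H 2))) Y)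
  + p.DivOp (p.Aop 0 Y) X
  - p.DivOp (p.Ttop 0 X) Y
  + (∑ a : p.ι 0, ∑ i : p.ι 1,
      G (s.mh 0 1 2 (E 1 i) Y) (E 0 a) * G (s.h 0 (E 0 a) X) (E 1 i))
  + G (s.Tt 0 Y (p.H 0)) X - G (s.ht 0 Y (p.H 0)) X
  + G (p.H 0) Y * G (s.P 0 (p.H 1 + p.H 2)) X
  - G (p.gm.nabla X (p.H 0)) Y
  - p.DivT (s.ht 1) X Y
  + (∑ a : p.ι 0, ∑ i : p.ι 1,
      G (s.mT 0 1 2 (E 1 i) Y) (E 0 a) * G (s.T 0 (E 0 a) X) (E 1 i))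
  - (∑ a : p.ι 0, ∑ i : p.ι 1,
      G (s.h 0 (E 0 a) X) (E 1 i) * G (s.mT 1 0 2 (E 0 a) Y) (E 1 i))
  - (∑ i : p.ι 1, ∑ μ : p.ι 2,
      G (s.mh 1 0 2 X (E 2 μ)) (E 1 i) * G (s.T 2 (E 2 μ) Y) (E 1 i))
  - (∑ a : p.ι 0, ∑ i : p.ι 1,
      G (s.mh 1 0 2 (E 0 a) Y) (E 1 i) * G (s.T 0 (E 0 a) X) (E 1 i))
  - (∑ i : p.ι 1, ∑ μ : p.ι 2,
      G (s.h 2 (E 2 μ) Y) (E 1 i) * G (s.mT 1 0 2 (E 2 μ) X) (E 1 i))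
  - G (p.H 1) X * G (p.H 1) Y
  + (∑ i : p.ι 1, ∑ j : p.ι 1,
      G X (s.h 1 (E 1 i) (E 1 j)) * G Y (s.h 1 (E 1 i) (E 1 j)))
  + (∑ i : p.ι 1, ∑ j : p.ι 1,
      G X (s.T 1 (E 1 i) (E 1 j)) * G Y (s.T 1 (E 1 i) (E 1 j)))
  - 2 * (∑ i : p.ι 1, ∑ μ : p.ι 2,
      G (s.mT 1 0 2 (E 2 μ) X) (E 1 i) * G (s.T 2 (E 2 μ) Y) (E 1 i))
  - 2 * (∑ a : p.ι 0, ∑ i : p.ι 1,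
      G (s.T 0 (E 0 a) X) (E 1 i) * G (s.mT 1 0 2 (E 0 a) Y) (E 1 i))
  - 2 * (∑ i : p.ι 1, ∑ μ : p.ι 2,
      G (s.h 2 (E 2 μ) Y) (E 1 i) * G (s.mT 2 0 1 (E 1 i) X) (E 2 μ))
  - 2 * (G Y (s.Tt 2 X (p.H 2)))
  - p.DivOp (p.Aop12 Y) X
  + p.DivOp (p.Ttop12 X) Y
  - (∑ i : p.ι 1, ∑ μ : p.ι 2,
      G (s.h 2 (E 2 μ) Y) (E 1 i) * G (s.mh 2 0 1 (E 1 i) X) (E 2 μ))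
  - G (s.T 2 Y (s.P 2 (p.H 0 + p.H 1))) X
  + G (s.h 2 Y (s.P 2 (p.H 0 + p.H 1))) X
  - G (s.P 2 (p.H 0 + p.H 1)) Y * G (p.H 2) X
  + G (p.gm.nabla X (s.P 2 (p.H 0 + p.H 1))) Y
  - (∑ i : p.ι 1, ∑ μ : p.ι 2,
      G (s.T 2 (E 2 μ) Y) (E 1 i) * G (s.mT 2 0 1 (E 1 i) X) (E 2 μ)) )

section AuxLemmas

variable {M : Type} {V : SmoothVF M}

lemma smul_half_cancel {A : Type u_1} [AddCommGroup A] [Module ℝ A] (v : A)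
    (h : (1 / 2 : ℝ) • v = 0) : v = 0 := by
  have h2 := congrArg (fun w => (2 : ℝ) • w) h
  simpa [smul_smul, show (2 : ℝ) * (1 / 2) = 1 by norm_num] using h2

namespace SmoothVF

lemma fsmul_zero' (V : SmoothVF M) (X : V.VF) : V.fsmul 0 X = 0 := by
  rw [show (0 : M → ℝ) = (fun _ => (0 : ℝ)) from rfl, V.fsmul_const, zero_smul]

lemma dd_zero (V : SmoothVF M) (X : V.VF) : V.dd X 0 = 0 := by
  have h := V.dd_add X 0 0
  rw [add_zero] at h
  exact (left_eq_add.mp h)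

end SmoothVF

namespace RMetric

variable (gm : RMetric V)

lemma nabla_zero_right (X : V.VF) : gm.nabla X 0 = 0 := by
  have h := gm.nabla_add_right X 0 0
  rw [add_zero] at h
  exact (left_eq_add.mp h)

lemma nabla_zero_left (X : V.VF) : gm.nabla 0 X = 0 := by
  have h := gm.nabla_add_left 0 0 X
  rw [add_zero] at h
  exact (left_eq_add.mp h)

/-- `g (· ) Z` as an additive homomorphism. -/
def gHom (Z : V.VF) : V.VF →+ (M → ℝ) :=
  AddMonoidHom.mk' (fun W => gm.g W Z) (fun a b => gm.g_add_left a b Z)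

lemma g_zero_left (X : V.VF) : gm.g 0 X = 0 := (gm.gHom X).map_zero

lemma g_zero_right (X : V.VF) : gm.g X 0 = 0 := by rw [gm.g_symm, gm.g_zero_left]

lemma g_sub_left (X Y Z : V.VF) : gm.g (X - Y) Z = gm.g X Z - gm.g Y Z :=
  (gm.gHom Z).map_sub X Y

lemma g_smul_left (r : ℝ) (X Y : V.VF) : gm.g (r • X) Y = r • gm.g X Y := by
  rw [← V.fsmul_const, gm.g_fsmul_left]
  funext x
  simp [Pi.mul_apply, Pi.smul_apply, smul_eq_mul]

end RMetric

namespace Split3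

variable {gm : RMetric V} (s : Split3 gm)

/-- `P i` as an additive homomorphism. -/
def Phom (i : Fin 3) : V.VF →+ V.VF := AddMonoidHom.mk' (s.P i) (s.P_add i)

lemma P_zero (i : Fin 3) : s.P i 0 = 0 := (s.Phom i).map_zero

lemma P_sub (i : Fin 3) (X Y : V.VF) : s.P i (X - Y) = s.P i X - s.P i Y :=
  (s.Phom i).map_sub X Y

lemma P_finsum {α : Type u_1} (i : Fin 3) (t : Finset α) (f : α → V.VF) :
    s.P i (∑ a ∈ t, f a) = ∑ a ∈ t, s.P i (f a) := map_sum (s.Phom i) f t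

lemma P_smul (i : Fin 3) (r : ℝ) (X : V.VF) : s.P i (r • X) = r • s.P i X := by
  rw [← V.fsmul_const, s.P_fsmul, V.fsmul_const]

lemma Pp_zero (i : Fin 3) : s.Pp i 0 = 0 := by
  simp only [Pp]; rw [s.P_zero, sub_zero]

lemma Pp_add (i : Fin 3) (X Y : V.VF) : s.Pp i (X + Y) = s.Pp i X + s.Pp i Y := by
  simp only [Pp]; rw [s.P_add]; abel

lemma Pp_of_P (i j : Fin 3) (hne : i ≠ j) (X : V.VF) : s.Pp i (s.P j X) = s.P j X := by
  simp only [Pp]; rw [s.P_orth i j X hne, sub_zero]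

lemma P_Pp (i : Fin 3) (X : V.VF) : s.P i (s.Pp i X) = 0 := by
  simp only [Pp]; rw [s.P_sub, s.P_idem, sub_self]

lemma Pp_Pp (i : Fin 3) (X : V.VF) : s.Pp i (s.Pp i X) = s.Pp i X := by
  simp only [Pp]; rw [s.P_sub, s.P_idem, sub_self, sub_zero]

lemma split0 (Z : V.VF) : s.Pp 0 Z = s.P 1 Z + s.P 2 Z := by
  simp only [Pp]
  rw [sub_eq_iff_eq_add',
    show s.P 0 Z + (s.P 1 Z + s.P 2 Z) = s.P 0 Z + s.P 1 Z + s.P 2 Z from by abel]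
  exact (s.P_sum Z).symm

lemma split1 (Z : V.VF) : s.Pp 1 Z = s.P 0 Z + s.P 2 Z := by
  simp only [Pp]
  rw [sub_eq_iff_eq_add',
    show s.P 1 Z + (s.P 0 Z + s.P 2 Z) = s.P 0 Z + s.P 1 Z + s.P 2 Z from by abel]
  exact (s.P_sum Z).symm

lemma split2 (Z : V.VF) : s.Pp 2 Z = s.P 0 Z + s.P 1 Z := by
  simp only [Pp]
  rw [sub_eq_iff_eq_add',
    show s.P 2 Z + (s.P 0 Z + s.P 1 Z) = s.P 0 Z + s.P 1 Z + s.P 2 Z from by abel]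
  exact (s.P_sum Z).symm

lemma P12_eq_Pp2 (X : V.VF) : s.P12 X = s.Pp 2 X := by
  simp only [P12, Pp]
  rw [eq_sub_iff_add_eq]
  exact s.P_sum X

lemma h12_eq_ht2 (X Y : V.VF) : s.h12 X Y = s.ht 2 X Y := by
  simp only [h12, ht, s.P12_eq_Pp2]

lemma Tt12_eq_T2 (X Y : V.VF) : s.Tt12 X Y = s.T 2 X Y := by
  simp only [Tt12, T, s.P12_eq_Pp2]

lemma ht_add_left (k : Fin 3) (A B W : V.VF) :
    s.ht k (A + B) W = s.ht k A W + s.ht k B W := by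
  simp only [ht]
  rw [s.Pp_add, gm.nabla_add_left, gm.nabla_add_right, ← smul_add, ← s.P_add]
  exact congrArg (fun v => (1 / 2 : ℝ) • s.P k v) (by abel)

lemma ht_add_right (k : Fin 3) (A B W : V.VF) :
    s.ht k W (A + B) = s.ht k W A + s.ht k W B := by
  simp only [ht]
  rw [s.Pp_add, gm.nabla_add_left, gm.nabla_add_right, ← smul_add, ← s.P_add]
  exact congrArg (fun v => (1 / 2 : ℝ) • s.P k v) (by abel)

lemma Tt_add_left (k : Fin 3) (A B W : V.VF) :
    s.Tt k (A + B) W = s.Tt k A W + s.Tt k B W := by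
  simp only [Tt]
  rw [s.Pp_add, gm.nabla_add_left, gm.nabla_add_right, ← smul_add, ← s.P_add]
  exact congrArg (fun v => (1 / 2 : ℝ) • s.P k v) (by abel)

lemma Tt_add_right (k : Fin 3) (A B W : V.VF) :
    s.Tt k W (A + B) = s.Tt k W A + s.Tt k W B := by
  simp only [Tt]
  rw [s.Pp_add, gm.nabla_add_left, gm.nabla_add_right, ← smul_add, ← s.P_add]
  exact congrArg (fun v => (1 / 2 : ℝ) • s.P k v) (by abel)

lemma ht_zero_left (k : Fin 3) (W : V.VF) : s.ht k 0 W = 0 := by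
  simp only [ht]
  rw [s.Pp_zero, gm.nabla_zero_left, gm.nabla_zero_right, add_zero, s.P_zero, smul_zero]

lemma ht_zero_right (k : Fin 3) (W : V.VF) : s.ht k W 0 = 0 := by
  simp only [ht]
  rw [s.Pp_zero, gm.nabla_zero_left, gm.nabla_zero_right, zero_add, s.P_zero, smul_zero]

lemma Tt_zero_left (k : Fin 3) (W : V.VF) : s.Tt k 0 W = 0 := by
  simp only [Tt]
  rw [s.Pp_zero, gm.nabla_zero_left, gm.nabla_zero_right, sub_zero, s.P_zero, smul_zero]

lemma h_zero_right (i : Fin 3) (W : V.VF) : s.h i W 0 = 0 := by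
  simp only [h]
  rw [s.P_zero, gm.nabla_zero_left, gm.nabla_zero_right, add_zero, s.Pp_zero, smul_zero]

lemma ht_symm (k : Fin 3) (A B : V.VF) : s.ht k A B = s.ht k B A := by
  simp only [ht]; rw [add_comm]

lemma mh_comm (k i j : Fin 3) (A B : V.VF) : s.mh k i j A B = s.mh k j i A B :=
  add_comm _ _

lemma ht_Pp_left (k : Fin 3) (U W : V.VF) : s.ht k (s.Pp k U) W = s.ht k U W := by
  simp only [ht]; rw [s.Pp_Pp]

lemma ht_Pp_right (k : Fin 3) (U W : V.VF) : s.ht k U (s.Pp k W) = s.ht k U W := by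
  simp only [ht]; rw [s.Pp_Pp]

lemma Tt_Pp_left (k : Fin 3) (U W : V.VF) : s.Tt k (s.Pp k U) W = s.Tt k U W := by
  simp only [Tt]; rw [s.Pp_Pp]

lemma Tt_Pp_right (k : Fin 3) (U W : V.VF) : s.Tt k U (s.Pp k W) = s.Tt k U W := by
  simp only [Tt]; rw [s.Pp_Pp]

lemma P_h_self (i : Fin 3) (U W : V.VF) : s.P i (s.h i U W) = 0 := by
  simp only [h]
  rw [s.P_smul, s.P_Pp, smul_zero]

lemma ht_eq_mh (k i j : Fin 3) (hij : i ≠ j) (A B : V.VF)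
    (hA : s.P i A = A) (hB : s.P j B = B) : s.ht k A B = s.mh k i j A B := by
  have h1 : s.P j A = 0 := by rw [← hA, s.P_orth j i A hij.symm]
  have h2 : s.P i B = 0 := by rw [← hB, s.P_orth i j B hij]
  simp only [mh]
  rw [hA, hB, h1, h2, s.ht_zero_left, add_zero]

lemma Tt_eq_mT (k i j : Fin 3) (hij : i ≠ j) (A B : V.VF)
    (hA : s.P i A = A) (hB : s.P j B = B) : s.Tt k A B = s.mT k i j A B := by
  have h1 : s.P j A = 0 := by rw [← hA, s.P_orth j i A hij.symm]
  have h2 : s.P i B = 0 := by rw [← hB, s.P_orth i j B hij]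
  simp only [mT]
  rw [hA, hB, h1, h2, s.Tt_zero_left, add_zero]

lemma P_nabla_eq (k : Fin 3) (A B : V.VF) (hA : s.Pp k A = A) (hB : s.Pp k B = B) :
    s.P k (gm.nabla A B) = s.ht k A B + s.Tt k A B := by
  simp only [ht, Tt]
  rw [hA, hB, ← smul_add, ← s.P_add,
    show gm.nabla A B + gm.nabla B A + (gm.nabla A B - gm.nabla B A)
      = (2 : ℝ) • gm.nabla A B from by rw [two_smul]; abel,
    s.P_smul, smul_smul]
  norm_num

lemma Tt_diag_zero (k i : Fin 3) (hik : k ≠ i) (U W : V.VF) (hTd : s.T i U W = 0) :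
    s.Tt k (s.P i U) (s.P i W) = 0 := by
  set d := gm.nabla (s.P i U) (s.P i W) - gm.nabla (s.P i W) (s.P i U) with hd
  have hPp : s.Pp i d = 0 := smul_half_cancel _ hTd
  have hPk : s.P k d = 0 := by
    rw [show d = s.P i d + s.Pp i d from by simp only [Pp]; abel,
      s.P_add, s.P_orth k i d hik, hPp, s.P_zero, add_zero]
  simp only [Tt]
  rw [s.Pp_of_P k i hik, s.Pp_of_P k i hik, ← hd, hPk, smul_zero]

lemma ht_diag_zero (k i : Fin 3) (hik : k ≠ i) (U W : V.VF)
    (hP : s.P k (s.h i U W) = 0) : s.ht k (s.P i U) (s.P i W) = 0 := by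
  set d := gm.nabla (s.P i U) (s.P i W) + gm.nabla (s.P i W) (s.P i U) with hd
  have h1 : (1 / 2 : ℝ) • s.P k (s.Pp i d) = 0 := by
    have h0 := hP
    simp only [h] at h0
    rwa [s.P_smul] at h0
  have hPp : s.P k (s.Pp i d) = 0 := smul_half_cancel _ h1
  have hPk : s.P k d = 0 := by
    rw [show d = s.P i d + s.Pp i d from by simp only [Pp]; abel,
      s.P_add, s.P_orth k i d hik, hPp, add_zero]
  simp only [ht]
  rw [s.Pp_of_P k i hik, s.Pp_of_P k i hik, ← hd, hPk, smul_zero]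

lemma Tt_total (k i j : Fin 3) (_hij : i ≠ j) (hik : k ≠ i) (hjk : k ≠ j)
    (hsplit : ∀ Z, s.Pp k Z = s.P i Z + s.P j Z)
    (hTi : ∀ A B, s.T i A B = 0) (hTj : ∀ A B, s.T j A B = 0)
    (hmT : ∀ A B, s.mT k i j A B = 0) (U W : V.VF) : s.Tt k U W = 0 := by
  calc s.Tt k U W = s.Tt k (s.Pp k U) (s.Pp k W) := by rw [s.Tt_Pp_left, s.Tt_Pp_right]
    _ = s.Tt k (s.P i U + s.P j U) (s.P i W + s.P j W) := by rw [hsplit, hsplit]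
    _ = s.Tt k (s.P i U) (s.P i W) + s.Tt k (s.P i U) (s.P j W)
        + (s.Tt k (s.P j U) (s.P i W) + s.Tt k (s.P j U) (s.P j W)) := by
          rw [s.Tt_add_left, s.Tt_add_right, s.Tt_add_right]
    _ = 0 := by
          rw [s.Tt_diag_zero k i hik U W (hTi U W), s.Tt_diag_zero k j hjk U W (hTj U W),
            zero_add, add_zero]
          exact hmT U W

lemma ht_total (k i j : Fin 3) (_hij : i ≠ j) (hik : k ≠ i) (hjk : k ≠ j)
    (hsplit : ∀ Z, s.Pp k Z = s.P i Z + s.P j Z)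
    (hPi : ∀ A B, s.P k (s.h i A B) = 0) (hPj : ∀ A B, s.P k (s.h j A B) = 0)
    (hmh : ∀ A B, s.mh k i j A B = 0) (U W : V.VF) : s.ht k U W = 0 := by
  calc s.ht k U W = s.ht k (s.Pp k U) (s.Pp k W) := by rw [s.ht_Pp_left, s.ht_Pp_right]
    _ = s.ht k (s.P i U + s.P j U) (s.P i W + s.P j W) := by rw [hsplit, hsplit]
    _ = s.ht k (s.P i U) (s.P i W) + s.ht k (s.P i U) (s.P j W)
        + (s.ht k (s.P j U) (s.P i W) + s.ht k (s.P j U) (s.P j W)) := by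
          rw [s.ht_add_left, s.ht_add_right, s.ht_add_right]
    _ = 0 := by
          rw [s.ht_diag_zero k i hik U W (hPi U W), s.ht_diag_zero k j hjk U W (hPj U W),
            zero_add, add_zero]
          exact hmh U W

lemma g_ht_zero (k : Fin 3) (A B ξ : V.VF) (hξ : s.P k ξ = 0) :
    gm.g (s.ht k A B) ξ = 0 := by
  simp only [ht]
  rw [gm.g_smul_left, s.P_selfadj, hξ, gm.g_zero_right, smul_zero]

end Split3

namespace Pkg

variable (p : Pkg V)

lemma DivOp_zero (S : V.VF → V.VF) (hS : ∀ X, S X = 0) (X : V.VF) :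
    p.DivOp S X = 0 := by
  unfold DivOp
  refine Finset.sum_eq_zero fun k _ => ?_
  simp only [hS, p.gm.nabla_zero_right, sub_zero, p.gm.g_zero_left]

lemma xF_P_ne (k : p.idx) (j : Fin 3) (h : j ≠ k.1) : p.sp.P j (p.xF k) = 0 := by
  rw [show p.xF k = p.sp.P k.1 (p.xF k) from (p.E_mem k.1 k.2).symm,
    p.sp.P_orth j k.1 _ h]

end Pkg

end AuxLemmas
/-- If `D₁, D₂, D₃` are integrable, pairwise mixed totally
geodesic and pairwise mixed integrable, and `P₃h₁ = P₃h₂ = 0`, then for all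
`X ∈ D₁`, `Y ∈ D₃`: `A_{1,Y} = 0` (hence `Div A_{1,Y} = 0`), `A_{12,Y} = 0`
(hence `Div A_{12,Y} = 0`), `g(∇_X H₁, Y) = 0`, `(Div h̃₂)(X,Y) = 0`, and
`P₃(H₁+H₂) = 0`; consequently the Euler-Lagrange equation corresponding to
variations with `B = B|_{(D₁×D₃)∪(D₃×D₁)}` holds, all its terms vanishing. -/
theorem integrable_mixed_tg_EL13_vanishes
    {M : Type} {V : SmoothVF M} (p : Pkg V)
    -- D₁, D₂, D₃ integrable
    (hT : ∀ (i : Fin 3) X Y, p.sp.T i X Y = 0)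
    -- pairwise mixed totally geodesic
    (hmh12 : ∀ X Y, p.sp.mh 2 0 1 X Y = 0)
    (hmh13 : ∀ X Y, p.sp.mh 1 0 2 X Y = 0)
    (hmh23 : ∀ X Y, p.sp.mh 0 1 2 X Y = 0)
    -- pairwise mixed integrable
    (hmT12 : ∀ X Y, p.sp.mT 2 0 1 X Y = 0)
    (hmT13 : ∀ X Y, p.sp.mT 1 0 2 X Y = 0)
    (hmT23 : ∀ X Y, p.sp.mT 0 1 2 X Y = 0)
    -- P₃ h₁ = 0 and P₃ h₂ = 0
    (hPh1 : ∀ X Y, p.sp.P 2 (p.sp.h 0 X Y) = 0)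
    (hPh2 : ∀ X Y, p.sp.P 2 (p.sp.h 1 X Y) = 0) :
    (∀ Y, p.sp.P 2 Y = Y →
      (∀ W Z, p.gm.g (p.sp.h 0 W Z) Y = 0)
      ∧ (∀ X, p.DivOp (p.Aop 0 Y) X = 0)
      ∧ (∀ W Z, p.gm.g (p.sp.h12 W Z) Y = 0)
      ∧ (∀ X, p.DivOp (p.Aop12 Y) X = 0))
    ∧ (∀ X Y, p.sp.P 0 X = X → p.sp.P 2 Y = Y →
        p.gm.g (p.gm.nabla X (p.H 0)) Y = 0 ∧ p.DivT (p.sp.ht 1) X Y = 0)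
    ∧ p.sp.P 2 (p.H 0 + p.H 1) = 0
    ∧ (∀ X Y, p.sp.P 0 X = X → p.sp.P 2 Y = Y → EL13 p X Y = 0) := by
  classical
  have hTt0 : ∀ U W, p.sp.Tt 0 U W = 0 :=
    p.sp.Tt_total 0 1 2 (by decide) (by decide) (by decide) p.sp.split0 (hT 1) (hT 2) hmT23
  have hTt1 : ∀ U W, p.sp.Tt 1 U W = 0 :=
    p.sp.Tt_total 1 0 2 (by decide) (by decide) (by decide) p.sp.split1 (hT 0) (hT 2) hmT13
  have hTt2 : ∀ U W, p.sp.Tt 2 U W = 0 :=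
    p.sp.Tt_total 2 0 1 (by decide) (by decide) (by decide) p.sp.split2 (hT 0) (hT 1) hmT12
  have hht2 : ∀ U W, p.sp.ht 2 U W = 0 :=
    p.sp.ht_total 2 0 1 (by decide) (by decide) (by decide) p.sp.split2 hPh1 hPh2 hmh12
  have hh12 : ∀ U W, p.sp.h12 U W = 0 := fun U W => by
    rw [p.sp.h12_eq_ht2]; exact hht2 U W
  have hTt12 : ∀ U W, p.sp.Tt12 U W = 0 := fun U W => by
    rw [p.sp.Tt12_eq_T2]; exact hT 2 U W
  have hP2H0 : p.sp.P 2 (p.H 0) = 0 := by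
    unfold Pkg.H; rw [p.sp.P_finsum]
    exact Finset.sum_eq_zero fun a _ => hPh1 _ _
  have hP2H1 : p.sp.P 2 (p.H 1) = 0 := by
    unfold Pkg.H; rw [p.sp.P_finsum]
    exact Finset.sum_eq_zero fun a _ => hPh2 _ _
  have hP2H01 : p.sp.P 2 (p.H 0 + p.H 1) = 0 := by
    rw [p.sp.P_add, hP2H0, hP2H1, add_zero]
  have hP0H0 : p.sp.P 0 (p.H 0) = 0 := by
    unfold Pkg.H; rw [p.sp.P_finsum]
    exact Finset.sum_eq_zero fun a _ => p.sp.P_h_self 0 _ _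
  have hH0P1 : p.sp.P 1 (p.H 0) = p.H 0 := by
    have h := p.sp.P_sum (p.H 0)
    rwa [hP0H0, hP2H0, zero_add, add_zero] at h
  have part1 : ∀ Y, p.sp.P 2 Y = Y →
      (∀ W Z, p.gm.g (p.sp.h 0 W Z) Y = 0) ∧ (∀ X, p.DivOp (p.Aop 0 Y) X = 0)
      ∧ (∀ W Z, p.gm.g (p.sp.h12 W Z) Y = 0) ∧ (∀ X, p.DivOp (p.Aop12 Y) X = 0) := by
    intro Y hY
    have hg0 : ∀ W Z, p.gm.g (p.sp.h 0 W Z) Y = 0 := by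
      intro W Z
      rw [← hY, ← p.sp.P_selfadj 2 (p.sp.h 0 W Z) Y, hPh1, p.gm.g_zero_left]
    have hA0 : ∀ X, p.Aop 0 Y X = 0 := by
      intro X
      unfold Pkg.Aop
      refine Finset.sum_eq_zero fun k _ => ?_
      rw [hg0, V.fsmul_zero']
    have hg12 : ∀ W Z, p.gm.g (p.sp.h12 W Z) Y = 0 := by
      intro W Z; rw [hh12, p.gm.g_zero_left]
    have hA12 : ∀ X, p.Aop12 Y X = 0 := by
      intro X
      unfold Pkg.Aop12
      refine Finset.sum_eq_zero fun k _ => ?_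
      rw [hg12, V.fsmul_zero']
    exact ⟨hg0, fun X => p.DivOp_zero _ hA0 X, hg12, fun X => p.DivOp_zero _ hA12 X⟩
  have part2 : ∀ X Y, p.sp.P 0 X = X → p.sp.P 2 Y = Y →
      p.gm.g (p.gm.nabla X (p.H 0)) Y = 0 ∧ p.DivT (p.sp.ht 1) X Y = 0 := by
    intro X Y hX hY
    have hP1X : p.sp.P 1 X = 0 := by rw [← hX, p.sp.P_orth 1 0 X (by decide)]
    have hP2X : p.sp.P 2 X = 0 := by rw [← hX, p.sp.P_orth 2 0 X (by decide)]
    have hP0Y : p.sp.P 0 Y = 0 := by rw [← hY, p.sp.P_orth 0 2 Y (by decide)]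
    have hP1Y : p.sp.P 1 Y = 0 := by rw [← hY, p.sp.P_orth 1 2 Y (by decide)]
    have hPp1X : p.sp.Pp 1 X = X := by simp only [Split3.Pp]; rw [hP1X, sub_zero]
    have hPp2X : p.sp.Pp 2 X = X := by simp only [Split3.Pp]; rw [hP2X, sub_zero]
    have hPp1Y : p.sp.Pp 1 Y = Y := by simp only [Split3.Pp]; rw [hP1Y, sub_zero]
    have hPp0Y : p.sp.Pp 0 Y = Y := by simp only [Split3.Pp]; rw [hP0Y, sub_zero]
    have ht1XY : p.sp.ht 1 X Y = 0 := by
      rw [p.sp.ht_eq_mh 1 0 2 (by decide) X Y hX hY]; exact hmh13 X Y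
    have hP1n : p.sp.P 1 (p.gm.nabla X Y) = 0 := by
      rw [p.sp.P_nabla_eq 1 X Y hPp1X hPp1Y, ht1XY, hTt1, add_zero]
    have hgH0Y : p.gm.g (p.H 0) Y = 0 := by
      rw [← hY, ← p.sp.P_selfadj 2 (p.H 0) Y, hP2H0, p.gm.g_zero_left]
    constructor
    · have hmc := p.gm.metric_compat X (p.H 0) Y
      rw [hgH0Y, V.dd_zero] at hmc
      have h2 : p.gm.g (p.H 0) (p.gm.nabla X Y) = 0 := by
        rw [← hH0P1, p.sp.P_selfadj, hP1n, p.gm.g_zero_right]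
      rw [h2, add_zero] at hmc
      exact hmc.symm
    · unfold Pkg.DivT
      refine Finset.sum_eq_zero fun k _ => ?_
      by_cases hk : k.1 = 1
      · have hxi : p.sp.P 1 (p.xF k) = p.xF k := by
          rw [show (1 : Fin 3) = k.1 from hk.symm]
          exact p.E_mem k.1 k.2
        have hPp2xi : p.sp.Pp 2 (p.xF k) = p.xF k := by
          rw [← hxi]; exact p.sp.Pp_of_P 2 1 (by decide) _
        have hPp0xi : p.sp.Pp 0 (p.xF k) = p.xF k := by
          rw [← hxi]; exact p.sp.Pp_of_P 0 1 (by decide) _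
        have e1 : p.sp.P 2 (p.gm.nabla (p.xF k) X) = 0 := by
          rw [p.sp.P_nabla_eq 2 (p.xF k) X hPp2xi hPp2X, hTt2, add_zero,
            p.sp.ht_symm, p.sp.ht_eq_mh 2 0 1 (by decide) X (p.xF k) hX hxi]
          exact hmh12 X (p.xF k)
        have e2 : p.sp.P 0 (p.gm.nabla (p.xF k) Y) = 0 := by
          rw [p.sp.P_nabla_eq 0 (p.xF k) Y hPp0xi hPp0Y, hTt0, add_zero,
            p.sp.ht_eq_mh 0 1 2 (by decide) (p.xF k) Y hxi hY]
          exact hmh23 (p.xF k) Y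
        have e3 : p.sp.ht 1 (p.gm.nabla (p.xF k) X) Y = 0 := by
          rw [← p.sp.ht_Pp_left 1 (p.gm.nabla (p.xF k) X) Y,
            p.sp.split1 (p.gm.nabla (p.xF k) X), p.sp.ht_add_left, e1,
            p.sp.ht_zero_left, add_zero,
            p.sp.ht_eq_mh 1 0 2 (by decide) _ Y (p.sp.P_idem 0 _) hY]
          exact hmh13 _ _
        have e4 : p.sp.ht 1 X (p.gm.nabla (p.xF k) Y) = 0 := by
          rw [← p.sp.ht_Pp_right 1 X (p.gm.nabla (p.xF k) Y),
            p.sp.split1 (p.gm.nabla (p.xF k) Y), p.sp.ht_add_right, e2,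
            p.sp.ht_zero_right, zero_add,
            p.sp.ht_eq_mh 1 0 2 (by decide) X _ hX (p.sp.P_idem 2 _)]
          exact hmh13 _ _
        rw [ht1XY, p.gm.nabla_zero_right, e3, e4, sub_zero, sub_zero, p.gm.g_zero_left]
      · have hxi : p.sp.P 1 (p.xF k) = 0 := p.xF_P_ne k 1 (fun h => hk h.symm)
        rw [ht1XY, p.gm.nabla_zero_right, p.gm.g_sub_left, p.gm.g_sub_left,
          p.gm.g_zero_left, p.sp.g_ht_zero 1 _ _ _ hxi, p.sp.g_ht_zero 1 _ _ _ hxi]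
        simp
  refine ⟨part1, part2, hP2H01, ?_⟩
  intro X Y hX hY
  obtain ⟨hg0, hdivA0, hg12, hdivA12⟩ := part1 Y hY
  obtain ⟨hnH0, hDivT13⟩ := part2 X Y hX hY
  have hgH0Y : p.gm.g (p.H 0) Y = 0 := by
    rw [← hY, ← p.sp.P_selfadj 2 (p.H 0) Y, hP2H0, p.gm.g_zero_left]
  have hgH1Y : p.gm.g (p.H 1) Y = 0 := by
    rw [← hY, ← p.sp.P_selfadj 2 (p.H 1) Y, hP2H1, p.gm.g_zero_left]
  have hYh1 : ∀ u v, p.gm.g Y (p.sp.h 1 u v) = 0 := by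
    intro u v
    rw [p.gm.g_symm, ← hY, ← p.sp.P_selfadj 2 (p.sp.h 1 u v) Y, hPh2, p.gm.g_zero_left]
  have hht0YH0 : p.gm.g (p.sp.ht 0 Y (p.H 0)) X = 0 := by
    have h0 : p.sp.ht 0 Y (p.H 0) = 0 := by
      rw [p.sp.ht_eq_mh 0 2 1 (by decide) Y (p.H 0) hY hH0P1, p.sp.mh_comm]
      exact hmh23 Y (p.H 0)
    rw [h0, p.gm.g_zero_left]
  have hdivTtop0 : p.DivOp (p.Ttop 0 X) Y = 0 := by
    refine p.DivOp_zero _ (fun W => ?_) Y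
    unfold Pkg.Ttop
    refine Finset.sum_eq_zero fun k _ => ?_
    rw [hTt0, p.gm.g_zero_left, V.fsmul_zero']
  have hdivTtop12 : p.DivOp (p.Ttop12 X) Y = 0 := by
    refine p.DivOp_zero _ (fun W => ?_) Y
    unfold Pkg.Ttop12
    refine Finset.sum_eq_zero fun k _ => ?_
    rw [hTt12, p.gm.g_zero_left, V.fsmul_zero']
  have hgTt2 : p.gm.g Y (p.sp.Tt 2 X (p.H 2)) = 0 := by
    rw [hTt2, p.gm.g_zero_right]
  simp only [EL13, hT, hmh12, hmh13, hmh23, hmT12, hmT13, hmT23, hTt0, hTt1, hTt2,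
    hdivA0, hdivTtop0, hdivA12, hdivTtop12, hnH0, hDivT13, hgH0Y, hgH1Y, hYh1,
    hht0YH0, hgTt2, hP2H01,
    p.gm.g_zero_left, p.gm.g_zero_right, p.sp.h_zero_right, p.gm.nabla_zero_right,
    mul_zero, zero_mul, Finset.sum_const_zero, add_zero, zero_add, sub_zero,
    zero_sub, neg_zero, sub_self]
end
end
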